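/- arXiv:2004.04766 — 3 statements merged into one kernel-verified Lean document; each statement's English description precedes it below -/
import Mathlib

section
/- Uniformly for integers m ≥ 1, n ≥ 1, and real y ≥ 1, one has ∑_{δ ≤ y, δ | m^∞, gcd(δ,n)=1} 1/δ = ∏_{p | m, p ∤ n} (1 - 1/p)^{-1} + O(b_{3/4}(m) / y^{1/4}), where the implied constant is absolute. -/
open Finset Real

noncomputable def rpowHom (α : ℝ) : ℕ →* ℝ where
  toFun n := (n : ℝ) ^ (-α)
  map_one' := by simp
  map_mul' a b := by
    push_cast
    exact Real.mul_rpow (Nat.cast_nonneg a) (Nat.cast_nonneg b)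

lemma hasSum_factored (α : ℝ) (hα : 0 < α) (P : Finset ℕ) (hP : ∀ p ∈ P, p.Prime) :
    HasSum (Set.indicator (Nat.factoredNumbers P) (fun n : ℕ => (n : ℝ) ^ (-α)))
      (∏ p ∈ P, (1 - (p : ℝ) ^ (-α))⁻¹) := by
  have h : ∀ {p : ℕ}, p.Prime → ‖rpowHom α p‖ < 1 := by
    intro p hp
    have h0 : (0:ℝ) ≤ (p:ℝ) ^ (-α) := Real.rpow_nonneg (Nat.cast_nonneg p) _
    have : ‖rpowHom α p‖ = (p:ℝ) ^ (-α) := Real.norm_of_nonneg h0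
    rw [this]
    exact Real.rpow_lt_one_of_one_lt_of_neg (by exact_mod_cast hp.one_lt) (by linarith)
  have key := (EulerProduct.summable_and_hasSum_factoredNumbers_prod_filter_prime_geometric h P).2
  rw [Finset.filter_true_of_mem hP] at key
  exact hasSum_subtype_iff_indicator.1 key

lemma coprime_iff_forall (a b : ℕ) (ha : a ≠ 0) (hb : b ≠ 0) :
    Nat.Coprime a b ↔ ∀ p ∈ a.primeFactors, ¬ p ∣ b := by
  rw [← Nat.disjoint_primeFactors ha hb, Finset.disjoint_left]
  constructor
  · intro h p hp hpb
    exact h hp (Nat.mem_primeFactors.2 ⟨Nat.prime_of_mem_primeFactors hp, hpb, hb⟩)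
  · intro h p hp hpb
    exact h p hp (Nat.mem_primeFactors.1 hpb).2.1

lemma per_prime (p : ℕ) (hp : p.Prime) :
    (1 - (p : ℝ) ^ (-(3/4 : ℝ)))⁻¹
      ≤ Real.exp (2 * (p : ℝ) ^ (-(3/2 : ℝ))) * (1 + (p : ℝ) ^ (-(3/4 : ℝ))) := by
  have hp0 : (0:ℝ) < p := by exact_mod_cast hp.pos
  have hp2 : (2:ℝ) ≤ p := by exact_mod_cast hp.two_le
  set x := (p : ℝ) ^ (-(3/4 : ℝ)) with hx
  have hx0 : 0 < x := Real.rpow_pos_of_pos hp0 _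
  have hx1 : x < 1 :=
    Real.rpow_lt_one_of_one_lt_of_neg (by exact_mod_cast hp.one_lt) (by norm_num)
  have hxsq : x ^ 2 = (p : ℝ) ^ (-(3/2 : ℝ)) := by
    rw [hx, ← Real.rpow_natCast ((p:ℝ) ^ (-(3/4:ℝ))) 2, ← Real.rpow_mul hp0.le]
    norm_num
  have hlt : (p : ℝ) ^ (-(3/2 : ℝ)) ≤ (2:ℝ) ^ (-(3/2 : ℝ)) :=
    Real.rpow_le_rpow_of_nonpos two_pos hp2 (by norm_num)
  have h2 : (2:ℝ) ^ (-(3/2 : ℝ)) ≤ 1/2 := by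
    rw [Real.rpow_neg (by norm_num)]
    have : (2:ℝ) = (2:ℝ) ^ (1:ℝ) := by norm_num
    have h21 : (2:ℝ) ^ (1:ℝ) ≤ (2:ℝ) ^ (3/2:ℝ) :=
      Real.rpow_le_rpow_of_exponent_le (by norm_num) (by norm_num)
    rw [Real.rpow_one] at h21
    rw [one_div]
    exact inv_anti₀ (by norm_num) h21
  have hxhalf : x ^ 2 ≤ 1/2 := by rw [hxsq]; linarith
  have h1x : 0 < 1 - x ^ 2 := by nlinarith
  have h1x' : 0 < 1 - x := by nlinarith
  have key : (1 - x)⁻¹ = (1 + x) / (1 - x ^ 2) := by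
    field_simp
    ring
  rw [key, ← hxsq, div_le_iff₀ h1x]
  have e := Real.add_one_le_exp (2 * x ^ 2)
  have s1 : (1:ℝ) ≤ (2 * x ^ 2 + 1) * (1 - x ^ 2) := by nlinarith [sq_nonneg x]
  have s2 : (2 * x ^ 2 + 1) * ((1 + x) * (1 - x ^ 2))
      ≤ Real.exp (2 * x ^ 2) * ((1 + x) * (1 - x ^ 2)) := by
    apply mul_le_mul_of_nonneg_right e
    positivity
  nlinarith [s1, s2, hx0.le, h1x.le]


/-- `b α m = ∏_{p ∣ m} (1 + 1/p^α)`. -/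
noncomputable def bFactor (α : ℝ) (m : ℕ) : ℝ :=
  ∏ p ∈ m.primeFactors, (1 + (p : ℝ) ^ (-α))

/-- Rankin-type estimate: uniformly for `m, n ≥ 1` and real `y ≥ 1`,
`∑_{δ ≤ y, δ ∣ m^∞, (δ,n)=1} 1/δ = ∏_{p ∣ m, p ∤ n} (1-1/p)⁻¹ + O(b_{3/4}(m)/y^{1/4})`. -/
theorem stmt_0 :
    ∃ C : ℝ, 0 < C ∧ ∀ (m n : ℕ) (y : ℝ), 1 ≤ m → 1 ≤ n → 1 ≤ y →
      |(∑ δ ∈ (Finset.Icc 1 ⌊y⌋₊).filter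
            (fun δ => δ.primeFactors ⊆ m.primeFactors ∧ Nat.Coprime δ n),
          (1 : ℝ) / δ)
        - ∏ p ∈ m.primeFactors.filter (fun p => ¬ p ∣ n), (1 - (p : ℝ)⁻¹)⁻¹|
      ≤ C * bFactor (3/4) m / y ^ ((1 : ℝ)/4) := by
  set T : ℝ := ∑' k : ℕ, (k : ℝ) ^ (-(3/2 : ℝ)) with hTdef
  refine ⟨Real.exp (2 * T), Real.exp_pos _, ?_⟩
  intro m n y hm hn hy
  set N := ⌊y⌋₊ with hN
  set P := m.primeFactors.filter (fun p => ¬ p ∣ n) with hPdef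
  have hP : ∀ p ∈ P, p.Prime := fun p hp =>
    Nat.prime_of_mem_primeFactors (Finset.mem_filter.1 hp).1
  have hsum32 : Summable (fun k : ℕ => (k : ℝ) ^ (-(3/2 : ℝ))) :=
    Real.summable_nat_rpow.2 (by norm_num)
  have h1 := hasSum_factored 1 one_pos P hP
  have h34 := hasSum_factored (3/4) (by norm_num) P hP
  set g := Set.indicator (Nat.factoredNumbers ↑P) (fun k : ℕ => (k : ℝ) ^ (-(1 : ℝ))) with hgdef
  set h := Set.indicator (Nat.factoredNumbers ↑P) (fun k : ℕ => (k : ℝ) ^ (-(3/4 : ℝ))) with hhdef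
  have hg0 : ∀ k, 0 ≤ g k := fun k =>
    Set.indicator_nonneg (fun i _ => Real.rpow_nonneg (Nat.cast_nonneg i) _) k
  have hh0 : ∀ k, 0 ≤ h k := fun k =>
    Set.indicator_nonneg (fun i _ => Real.rpow_nonneg (Nat.cast_nonneg i) _) k
  -- condition equivalence
  have hcond : ∀ δ : ℕ, δ ≠ 0 →
      ((δ.primeFactors ⊆ m.primeFactors ∧ Nat.Coprime δ n) ↔ δ ∈ Nat.factoredNumbers P) := by
    intro δ hδ
    rw [Nat.mem_factoredNumbers_iff_primeFactors_subset]
    have hcop := coprime_iff_forall δ n hδ (by omega)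
    constructor
    · rintro ⟨hsub, hc⟩
      exact ⟨hδ, fun p hp => Finset.mem_filter.2 ⟨hsub hp, hcop.1 hc p hp⟩⟩
    · rintro ⟨-, hsub⟩
      exact ⟨fun p hp => (Finset.mem_filter.1 (hsub hp)).1,
        hcop.2 fun p hp => (Finset.mem_filter.1 (hsub hp)).2⟩
  -- partial sum equals sum of g over Icc
  have hpartial : (∑ δ ∈ (Finset.Icc 1 N).filter
        (fun δ => δ.primeFactors ⊆ m.primeFactors ∧ Nat.Coprime δ n), (1 : ℝ) / δ)
      = ∑ δ ∈ Finset.Icc 1 N, g δ := by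
    rw [Finset.sum_filter]
    refine Finset.sum_congr rfl fun δ hδ => ?_
    have hδ1 : 1 ≤ δ := (Finset.mem_Icc.1 hδ).1
    have hδ0 : δ ≠ 0 := by omega
    by_cases hc : δ.primeFactors ⊆ m.primeFactors ∧ Nat.Coprime δ n
    · rw [if_pos hc, hgdef, Set.indicator_of_mem ((hcond δ hδ0).1 hc)]
      rw [Real.rpow_neg_one, one_div]
    · rw [if_neg hc, hgdef, Set.indicator_of_notMem (fun hmem => hc ((hcond δ hδ0).2 hmem))]
  -- the main product equals the HasSum value
  have hprodA : (∏ p ∈ P, (1 - (p : ℝ) ^ (-(1:ℝ)))⁻¹)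
      = ∏ p ∈ P, (1 - (p : ℝ)⁻¹)⁻¹ :=
    Finset.prod_congr rfl fun p _ => by rw [Real.rpow_neg_one]
  -- difference is the tail
  have hsplit := Summable.sum_add_tsum_compl (s := Finset.Icc 1 N) h1.summable
  set tail := ∑' (x : ↑(↑(Finset.Icc 1 N) : Set ℕ)ᶜ), g ↑x with htail
  have htail0 : 0 ≤ tail := tsum_nonneg fun x => hg0 _
  have hdiff : (∑ δ ∈ (Finset.Icc 1 N).filter
        (fun δ => δ.primeFactors ⊆ m.primeFactors ∧ Nat.Coprime δ n), (1 : ℝ) / δ)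
      - (∏ p ∈ P, (1 - (p : ℝ)⁻¹)⁻¹) = -tail := by
    rw [hpartial, ← hprodA, ← h1.tsum_eq]
    linarith [hsplit]
  rw [hdiff, abs_neg, abs_of_nonneg htail0]
  -- tail bound termwise
  have hy0 : (0:ℝ) < y := by linarith
  have hterm : ∀ x : ↑(↑(Finset.Icc 1 N) : Set ℕ)ᶜ,
      g ↑x ≤ y ^ (-(1/4 : ℝ)) * h ↑x := by
    rintro ⟨δ, hδc⟩
    simp only [Set.mem_compl_iff, Finset.coe_Icc, Set.mem_Icc] at hδc
    by_cases hmem : δ ∈ Nat.factoredNumbers P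
    · have hδ0 : δ ≠ 0 := Nat.ne_zero_of_mem_factoredNumbers hmem
      have hδN : N < δ := by omega
      have hyδ : y ≤ (δ : ℝ) := by
        have h1' : y < (N : ℝ) + 1 := Nat.lt_floor_add_one y
        have h2' : (N : ℝ) + 1 ≤ (δ : ℝ) := by exact_mod_cast hδN
        linarith
      have hδpos : (0:ℝ) < (δ:ℝ) := by exact_mod_cast Nat.pos_of_ne_zero hδ0
      rw [hgdef, hhdef, Set.indicator_of_mem hmem, Set.indicator_of_mem hmem]
      have hsplit' : (δ:ℝ) ^ (-(1:ℝ)) = (δ:ℝ) ^ (-(1/4:ℝ)) * (δ:ℝ) ^ (-(3/4:ℝ)) := by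
        rw [← Real.rpow_add hδpos]; norm_num
      rw [hsplit']
      apply mul_le_mul_of_nonneg_right _ (Real.rpow_nonneg hδpos.le _)
      exact Real.rpow_le_rpow_of_nonpos hy0 hyδ (by norm_num)
    · rw [hgdef, hhdef, Set.indicator_of_notMem hmem, Set.indicator_of_notMem hmem, mul_zero]
  -- summabilities for tsum_le_tsum
  have hgsub : Summable ((g ∘ Subtype.val) : ↑(↑(Finset.Icc 1 N) : Set ℕ)ᶜ → ℝ) :=
    h1.summable.subtype _
  have hhsub : Summable (((fun k => y ^ (-(1/4:ℝ)) * h k) ∘ Subtype.val) :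
      ↑(↑(Finset.Icc 1 N) : Set ℕ)ᶜ → ℝ) :=
    (h34.summable.mul_left _).subtype _
  have hstep1 : tail ≤ ∑' (x : ↑(↑(Finset.Icc 1 N) : Set ℕ)ᶜ), y ^ (-(1/4:ℝ)) * h ↑x :=
    Summable.tsum_le_tsum hterm hgsub hhsub
  have hstep2 : (∑' (x : ↑(↑(Finset.Icc 1 N) : Set ℕ)ᶜ), y ^ (-(1/4:ℝ)) * h ↑x)
      = y ^ (-(1/4:ℝ)) * ∑' (x : ↑(↑(Finset.Icc 1 N) : Set ℕ)ᶜ), h ↑x := tsum_mul_left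
  have hstep3 : (∑' (x : ↑(↑(Finset.Icc 1 N) : Set ℕ)ᶜ), h ↑x) ≤ ∑' k, h k := by
    have := Summable.tsum_subtype_add_tsum_subtype_compl h34.summable ↑(Finset.Icc 1 N)
    have hnn : 0 ≤ ∑' (x : ↑(↑(Finset.Icc 1 N) : Set ℕ)), h ↑x := tsum_nonneg fun x => hh0 _
    linarith
  have hB : (∑' k, h k) = ∏ p ∈ P, (1 - (p : ℝ) ^ (-(3/4:ℝ)))⁻¹ := h34.tsum_eq
  -- bound the product B
  have hBbound : (∏ p ∈ P, (1 - (p : ℝ) ^ (-(3/4:ℝ)))⁻¹)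
      ≤ Real.exp (2 * T) * bFactor (3/4) m := by
    have step : (∏ p ∈ P, (1 - (p : ℝ) ^ (-(3/4:ℝ)))⁻¹)
        ≤ ∏ p ∈ P, (Real.exp (2 * (p : ℝ) ^ (-(3/2 : ℝ))) * (1 + (p : ℝ) ^ (-(3/4 : ℝ)))) := by
      apply Finset.prod_le_prod
      · intro p hp
        have hx1 : (p:ℝ) ^ (-(3/4:ℝ)) < 1 :=
          Real.rpow_lt_one_of_one_lt_of_neg (by exact_mod_cast (hP p hp).one_lt) (by norm_num)
        have h1x : (0:ℝ) < 1 - (p:ℝ) ^ (-(3/4:ℝ)) := by linarith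
        positivity
      · intro p hp; exact per_prime p (hP p hp)
    refine step.trans ?_
    rw [Finset.prod_mul_distrib, ← Real.exp_sum]
    have e1 : (∑ p ∈ P, 2 * (p : ℝ) ^ (-(3/2 : ℝ))) ≤ 2 * T := by
      rw [hTdef, ← Finset.mul_sum]
      have := Summable.sum_le_tsum P (fun k _ => Real.rpow_nonneg (Nat.cast_nonneg k) (-(3/2:ℝ))) hsum32
      linarith
    have e2 : (∏ p ∈ P, (1 + (p : ℝ) ^ (-(3/4 : ℝ)))) ≤ bFactor (3/4) m := by
      unfold bFactor
      have hsub : P ⊆ m.primeFactors := by rw [hPdef]; exact Finset.filter_subset _ _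
      rw [← Finset.prod_sdiff hsub]
      have hone : (1:ℝ) ≤ ∏ p ∈ m.primeFactors \ P, (1 + (p : ℝ) ^ (-(3/4 : ℝ))) := by
        have hmono := Finset.prod_le_prod (s := m.primeFactors \ P)
          (f := fun _ : ℕ => (1:ℝ)) (g := fun p : ℕ => 1 + (p:ℝ) ^ (-(3/4:ℝ)))
          (fun p _ => zero_le_one)
          (fun p _ => by
            have : (0:ℝ) ≤ (p:ℝ) ^ (-(3/4:ℝ)) := Real.rpow_nonneg (Nat.cast_nonneg p) _
            linarith)
        simpa using hmono
      have hnn : (0:ℝ) ≤ ∏ p ∈ P, (1 + (p : ℝ) ^ (-(3/4 : ℝ))) := by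
        refine Finset.prod_nonneg fun p _ => ?_
        have : (0:ℝ) ≤ (p:ℝ) ^ (-(3/4:ℝ)) := Real.rpow_nonneg (Nat.cast_nonneg p) _
        linarith
      calc (∏ p ∈ P, (1 + (p : ℝ) ^ (-(3/4 : ℝ))))
          = 1 * ∏ p ∈ P, (1 + (p : ℝ) ^ (-(3/4 : ℝ))) := (one_mul _).symm
        _ ≤ (∏ p ∈ m.primeFactors \ P, (1 + (p : ℝ) ^ (-(3/4 : ℝ))))
            * ∏ p ∈ P, (1 + (p : ℝ) ^ (-(3/4 : ℝ))) :=
            mul_le_mul_of_nonneg_right hone hnn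
    have hnn1 : (0:ℝ) ≤ ∏ p ∈ P, (1 + (p : ℝ) ^ (-(3/4 : ℝ))) := by
      apply Finset.prod_nonneg; intro p hp
      have : (0:ℝ) ≤ (p:ℝ) ^ (-(3/4:ℝ)) := Real.rpow_nonneg (Nat.cast_nonneg p) _
      linarith
    exact mul_le_mul (Real.exp_le_exp.2 e1) e2 hnn1 (Real.exp_pos _).le
  -- assemble
  have hfinal : tail ≤ y ^ (-(1/4:ℝ)) * (Real.exp (2 * T) * bFactor (3/4) m) := by
    calc tail ≤ y ^ (-(1/4:ℝ)) * ∑' (x : ↑(↑(Finset.Icc 1 N) : Set ℕ)ᶜ), h ↑x :=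
          hstep1.trans (le_of_eq hstep2)
      _ ≤ y ^ (-(1/4:ℝ)) * (Real.exp (2 * T) * bFactor (3/4) m) := by
          exact mul_le_mul_of_nonneg_left ((hstep3.trans (le_of_eq hB)).trans hBbound)
            (Real.rpow_nonneg hy0.le _)
  have hrw : Real.exp (2 * T) * bFactor (3/4) m / y ^ ((1:ℝ)/4)
      = y ^ (-(1/4:ℝ)) * (Real.exp (2 * T) * bFactor (3/4) m) := by
    rw [Real.rpow_neg hy0.le, div_eq_mul_inv, mul_comm]
  rw [hrw]
  exact hfinal
end

section
/- Uniformly for 2 ≤ y ≤ z ≤ x, the number of integers n ≤ x whose y-smooth part exceeds z satisfies #{n ≤ x : ∏_{p^ν ∥ n, p ≤ y} p^ν > z} ≪ x · exp(−(log z)/(2 log y)). -/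
open Finset Real

/-- The `y`-smooth part of `n`: the product of the prime powers `p^ν ∥ n` with `p ≤ y`. -/
noncomputable def smoothPart (y : ℝ) (n : ℕ) : ℕ :=
  ∏ p ∈ n.primeFactors.filter (fun p => ((p : ℕ) : ℝ) ≤ y), p ^ (n.factorization p)

open ArithmeticFunction
open scoped ArithmeticFunction.zeta

noncomputable def al (y : ℝ) : ℝ := (2 * Real.log y)⁻¹
noncomputable def gl (y : ℝ) (p k : ℕ) : ℝ :=
  if (p : ℝ) ≤ y then (p : ℝ) ^ ((k : ℝ) * al y) - (p : ℝ) ^ (((k : ℝ) - 1) * al y) else 0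
noncomputable def gf (y : ℝ) (d : ℕ) : ℝ :=
  if d = 0 then 0 else ∏ p ∈ d.primeFactors, gl y p (d.factorization p)

lemma prod_primeFactors_mul_coprime {M : Type*} [CommMonoid M] (F : ℕ → ℕ → M) {m n : ℕ}
    (hm : m ≠ 0) (hn : n ≠ 0) (h : Nat.Coprime m n) :
    ∏ p ∈ (m * n).primeFactors, F p ((m * n).factorization p)
      = (∏ p ∈ m.primeFactors, F p (m.factorization p))
        * ∏ p ∈ n.primeFactors, F p (n.factorization p) := by
  rw [Nat.Coprime.primeFactors_mul h, Finset.prod_union (Nat.Coprime.disjoint_primeFactors h)]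
  congr 1
  · refine Finset.prod_congr rfl fun p hp => ?_
    have hnp : n.factorization p = 0 := by
      have : p ∉ n.primeFactors := Finset.disjoint_left.mp (Nat.Coprime.disjoint_primeFactors h) hp
      rwa [← Nat.support_factorization, Finsupp.notMem_support_iff] at this
    rw [Nat.factorization_mul hm hn, Finsupp.add_apply, hnp, add_zero]
  · refine Finset.prod_congr rfl fun p hp => ?_
    have hmp : m.factorization p = 0 := by
      have : p ∉ m.primeFactors := Finset.disjoint_right.mp (Nat.Coprime.disjoint_primeFactors h) hp
      rwa [← Nat.support_factorization, Finsupp.notMem_support_iff] at this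
    rw [Nat.factorization_mul hm hn, Finsupp.add_apply, hmp, zero_add]

lemma logy_pos {y : ℝ} (hy : 2 ≤ y) : 0 < Real.log y := Real.log_pos (by linarith)

lemma al_pos {y : ℝ} (hy : 2 ≤ y) : 0 < al y := by
  have := logy_pos hy; unfold al; positivity

lemma gl_nonneg {y : ℝ} (hy : 2 ≤ y) {p : ℕ} (hp : 1 ≤ p) (k : ℕ) : 0 ≤ gl y p k := by
  unfold gl
  split
  · have h1 : (1:ℝ) ≤ (p:ℝ) := by exact_mod_cast hp
    have h2 : ((k:ℝ) - 1) * al y ≤ (k:ℝ) * al y :=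
      mul_le_mul_of_nonneg_right (by linarith) (al_pos hy).le
    have := Real.rpow_le_rpow_of_exponent_le h1 h2
    linarith
  · exact le_refl 0

lemma gf_one (y : ℝ) : gf y 1 = 1 := by simp [gf]

noncomputable def GA (y : ℝ) : ArithmeticFunction ℝ := ⟨gf y, by simp [gf]⟩

lemma GA_apply (y : ℝ) (d : ℕ) : GA y d = gf y d := rfl

lemma GA_mult {y : ℝ} : (GA y).IsMultiplicative := by
  rw [ArithmeticFunction.IsMultiplicative.iff_ne_zero]
  constructor
  · simpa [GA_apply] using gf_one y
  · intro m n hm hn hmn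
    simp only [GA_apply, gf, if_neg hm, if_neg hn, if_neg (mul_ne_zero hm hn)]
    exact prod_primeFactors_mul_coprime _ hm hn hmn

lemma smoothPart_eq_prod (y : ℝ) (n : ℕ) :
    smoothPart y n = ∏ p ∈ n.primeFactors, (if (p:ℝ) ≤ y then p ^ (n.factorization p) else 1) := by
  rw [smoothPart, Finset.prod_filter]

lemma smoothPart_mul {y : ℝ} {m n : ℕ} (hm : m ≠ 0) (hn : n ≠ 0) (h : Nat.Coprime m n) :
    smoothPart y (m * n) = smoothPart y m * smoothPart y n := by
  rw [smoothPart_eq_prod, smoothPart_eq_prod, smoothPart_eq_prod]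
  exact prod_primeFactors_mul_coprime (fun p k => if (p:ℝ) ≤ y then p ^ k else 1) hm hn h

noncomputable def FA (y : ℝ) : ArithmeticFunction ℝ :=
  ⟨fun n => if n = 0 then 0 else ((smoothPart y n : ℕ) : ℝ) ^ al y, by simp⟩

lemma smoothPart_one (y : ℝ) : smoothPart y 1 = 1 := by simp [smoothPart]

lemma FA_mult {y : ℝ} : (FA y).IsMultiplicative := by
  rw [ArithmeticFunction.IsMultiplicative.iff_ne_zero]
  constructor
  · simp [FA, smoothPart_one]
  · intro m n hm hn hmn
    simp only [FA, ArithmeticFunction.coe_mk, if_neg hm, if_neg hn, if_neg (mul_ne_zero hm hn)]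
    rw [smoothPart_mul hm hn hmn]
    push_cast
    exact Real.mul_rpow (by positivity) (by positivity)

lemma smoothPart_prime_pow {y : ℝ} {p : ℕ} (hp : p.Prime) {k : ℕ} (hk : k ≠ 0) :
    smoothPart y (p ^ k) = if (p : ℝ) ≤ y then p ^ k else 1 := by
  rw [smoothPart_eq_prod, Nat.primeFactors_prime_pow hk hp, Finset.prod_singleton,
    hp.factorization_pow, Finsupp.single_eq_same]

lemma gf_prime_pow {y : ℝ} {p : ℕ} (hp : p.Prime) {k : ℕ} (hk : k ≠ 0) :
    gf y (p ^ k) = gl y p k := by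
  rw [gf, if_neg (pow_ne_zero _ hp.pos.ne'), Nat.primeFactors_prime_pow hk hp,
    Finset.prod_singleton, hp.factorization_pow, Finsupp.single_eq_same]

lemma FA_eq_zeta_mul_GA (y : ℝ) : FA y = ↑ζ * GA y := by
  have hzg : (↑ζ * GA y).IsMultiplicative :=
    (ArithmeticFunction.isMultiplicative_zeta.natCast).mul GA_mult
  rw [ArithmeticFunction.IsMultiplicative.eq_iff_eq_on_prime_powers _ FA_mult _ hzg]
  intro p i hp
  rcases Nat.eq_zero_or_pos i with rfl | hi
  · simpa using (FA_mult.1.trans hzg.1.symm)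
  have hp0 : (0:ℝ) < (p:ℝ) := by exact_mod_cast hp.pos
  have hne : p ^ i ≠ 0 := pow_ne_zero i hp.pos.ne'
  have hrhs : (↑ζ * GA y) (p ^ i) = 1 + ∑ j ∈ Finset.range i, gl y p (j + 1) := by
    rw [ArithmeticFunction.coe_zeta_mul_apply, Nat.sum_divisors_prime_pow hp,
      Finset.sum_range_succ']
    simp only [pow_zero, GA_apply, gf_one, add_comm]
    congr 1
    refine Finset.sum_congr rfl fun j _ => ?_
    rw [gf_prime_pow hp (Nat.succ_ne_zero j)]
  have hlhs : FA y (p ^ i) = ((smoothPart y (p ^ i) : ℕ) : ℝ) ^ al y := by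
    simp only [FA, ArithmeticFunction.coe_mk, if_neg hne]
  by_cases hpy : (p : ℝ) ≤ y
  · have hs : ∑ j ∈ Finset.range i, gl y p (j + 1)
        = ∑ j ∈ Finset.range i,
            ((p:ℝ) ^ ((((j+1) : ℕ):ℝ) * al y) - (p:ℝ) ^ (((j : ℕ):ℝ) * al y)) := by
      refine Finset.sum_congr rfl fun j _ => ?_
      rw [gl, if_pos hpy]
      push_cast
      ring_nf
    have htel := Finset.sum_range_sub (fun j => (p:ℝ) ^ (((j : ℕ):ℝ) * al y)) i
    rw [hrhs, hs, htel, hlhs, smoothPart_prime_pow hp hi.ne', if_pos hpy, Nat.cast_pow,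
      ← Real.rpow_natCast (p:ℝ) i, ← Real.rpow_mul hp0.le]
    norm_num
  · have h0 : ∑ j ∈ Finset.range i, gl y p (j + 1) = 0 :=
      Finset.sum_eq_zero fun j _ => by rw [gl, if_neg hpy]
    rw [hrhs, h0, hlhs, smoothPart_prime_pow hp hi.ne', if_neg hpy]
    simp

lemma claimA {y : ℝ} (n : ℕ) (hn : n ≠ 0) :
    ((smoothPart y n : ℕ) : ℝ) ^ al y = ∑ d ∈ n.divisors, gf y d := by
  have h : FA y n = (↑ζ * GA y) n := by rw [FA_eq_zeta_mul_GA]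
  rw [ArithmeticFunction.coe_zeta_mul_apply] at h
  simp only [FA, ArithmeticFunction.coe_mk, if_neg hn] at h
  exact h

lemma gf_nonneg {y : ℝ} (hy : 2 ≤ y) (d : ℕ) : 0 ≤ gf y d := by
  rw [gf]
  split
  · exact le_refl 0
  · exact Finset.prod_nonneg fun p hp =>
      gl_nonneg hy (Nat.prime_of_mem_primeFactors hp).one_lt.le _

lemma swap_sum (gg : ℕ → ℝ) (N : ℕ) :
    ∑ n ∈ Finset.Icc 1 N, ∑ d ∈ n.divisors, gg d
      = ∑ d ∈ Finset.Icc 1 N, gg d * ((N / d : ℕ) : ℝ) := by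
  have hIoc : Finset.Icc 1 N = Finset.Ioc 0 N := by
    ext a; simp [Nat.lt_iff_add_one_le]
  have h1 : ∀ n ∈ Finset.Icc 1 N, ∑ d ∈ n.divisors, gg d
      = ∑ d ∈ Finset.Icc 1 N, if d ∣ n then gg d else 0 := by
    intro n hn
    rw [Finset.mem_Icc] at hn
    rw [← Finset.sum_filter]
    congr 1
    ext d
    simp only [Nat.mem_divisors, Finset.mem_filter, Finset.mem_Icc]
    constructor
    · rintro ⟨hd, hn0⟩
      exact ⟨⟨Nat.pos_of_dvd_of_pos hd (by omega),
        le_trans (Nat.le_of_dvd (by omega) hd) hn.2⟩, hd⟩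
    · rintro ⟨_, hd⟩
      exact ⟨hd, by omega⟩
  rw [Finset.sum_congr rfl h1, Finset.sum_comm]
  refine Finset.sum_congr rfl fun d hd => ?_
  rw [← Finset.sum_filter, Finset.sum_const, hIoc, Nat.Ioc_filter_dvd_card_eq_div,
    nsmul_eq_mul, mul_comm]

lemma sum_le_prod_local (gg : ℕ → ℝ) (hg0 : ∀ d, d ≠ 0 → 0 ≤ gg d) (hg1 : gg 1 = 1)
    (hmul : ∀ p k m, p.Prime → ¬ p ∣ m → m ≠ 0 → gg (p ^ k * m) = gg (p ^ k) * gg m)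
    (N : ℕ) (Q : Finset ℕ) (hQ : ∀ p ∈ Q, p.Prime) :
    ∑ d ∈ (Finset.Icc 1 N).filter (fun d => d.primeFactors ⊆ Q), gg d / (d : ℝ)
      ≤ ∏ p ∈ Q, ∑ k ∈ Finset.range (N + 1), gg (p ^ k) / ((p ^ k : ℕ) : ℝ) := by
  induction Q using Finset.induction_on with
  | empty =>
    simp only [Finset.prod_empty]
    have hsub : (Finset.Icc 1 N).filter (fun d => d.primeFactors ⊆ (∅ : Finset ℕ)) ⊆ {1} := by
      intro d hd
      simp only [Finset.mem_filter, Finset.mem_Icc, Finset.subset_empty] at hd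
      have h01 := Nat.primeFactors_eq_empty.mp hd.2
      simp only [Finset.mem_singleton]
      omega
    calc ∑ d ∈ (Finset.Icc 1 N).filter (fun d => d.primeFactors ⊆ (∅ : Finset ℕ)), gg d / (d : ℝ)
        ≤ ∑ d ∈ ({1} : Finset ℕ), gg d / (d : ℝ) := by
          refine Finset.sum_le_sum_of_subset_of_nonneg hsub fun d hd _ => ?_
          simp only [Finset.mem_singleton] at hd
          subst hd
          simp [hg1]
      _ = 1 := by simp [hg1]
  | @insert p Q hpQ ih =>
    have hp : p.Prime := hQ p (Finset.mem_insert_self p Q)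
    have hQ' : ∀ q ∈ Q, q.Prime := fun q hq => hQ q (Finset.mem_insert_of_mem hq)
    specialize ih hQ'
    set A := (Finset.Icc 1 N).filter (fun d => d.primeFactors ⊆ insert p Q) with hA
    set B := (Finset.Icc 1 N).filter (fun d => d.primeFactors ⊆ Q) with hB
    set u : ℕ × ℕ → ℝ :=
      fun km => gg (p ^ km.1) / ((p ^ km.1 : ℕ) : ℝ) * (gg km.2 / (km.2 : ℝ)) with hu
    set φ : ℕ → ℕ × ℕ := fun d => (d.factorization p, (d / p ^ d.factorization p)) with hφ
    have hdecomp : ∀ d ∈ A, d ≠ 0 ∧ d = p ^ d.factorization p * (d / p ^ d.factorization p) := by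
      intro d hd
      simp only [hA, Finset.mem_filter, Finset.mem_Icc] at hd
      have hd0 : d ≠ 0 := by omega
      exact ⟨hd0, (Nat.ordProj_mul_ordCompl_eq_self d p).symm⟩
    have hterm : ∀ d ∈ A, gg d / (d : ℝ) = u (φ d) := by
      intro d hd
      obtain ⟨hd0, hdd⟩ := hdecomp d hd
      have hmm : ¬ p ∣ (d / p ^ d.factorization p) := Nat.not_dvd_ordCompl hp hd0
      have hm0 : (d / p ^ d.factorization p) ≠ 0 := (Nat.ordCompl_pos p hd0).ne'
      have := hmul p (d.factorization p) ((d / p ^ d.factorization p)) hp hmm hm0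
      rw [hu, hφ]
      simp only
      rw [← mul_div_mul_comm, ← this, ← Nat.cast_mul, ← hdd]
    have hinj : ∀ d₁ ∈ A, ∀ d₂ ∈ A, φ d₁ = φ d₂ → d₁ = d₂ := by
      intro d₁ h₁ d₂ h₂ heq
      obtain ⟨_, hdd₁⟩ := hdecomp d₁ h₁
      obtain ⟨_, hdd₂⟩ := hdecomp d₂ h₂
      rw [hφ] at heq
      simp only [Prod.mk.injEq] at heq
      calc d₁ = p ^ d₁.factorization p * (d₁ / p ^ d₁.factorization p) := hdd₁
        _ = p ^ d₂.factorization p * (d₂ / p ^ d₂.factorization p) := by rw [heq.2, heq.1]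
        _ = d₂ := hdd₂.symm
    have hsub : A.image φ ⊆ Finset.range (N + 1) ×ˢ B := by
      intro km hkm
      obtain ⟨d, hd, hφd⟩ := Finset.mem_image.mp hkm
      obtain ⟨hd0, hdd⟩ := hdecomp d hd
      simp only [hA, Finset.mem_filter, Finset.mem_Icc] at hd
      subst hφd
      simp only [Finset.mem_product, Finset.mem_range, hB, Finset.mem_filter, Finset.mem_Icc]
      have hpk_le : p ^ d.factorization p ≤ d := Nat.ordProj_le p hd0
      have hk : d.factorization p < N + 1 := by
        have h1 := Nat.lt_pow_self hp.one_lt (n := d.factorization p)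
        omega
      have hm1 : 1 ≤ (d / p ^ d.factorization p) := Nat.ordCompl_pos p hd0
      have hmN : (d / p ^ d.factorization p) ≤ N := le_trans (Nat.ordCompl_le d p) hd.1.2
      refine ⟨hk, ⟨hm1, hmN⟩, ?_⟩
      intro q hq
      have hqd : q ∈ d.primeFactors :=
        Nat.primeFactors_mono (Nat.ordCompl_dvd d p) hd0 hq
      have hqQ := hd.2 hqd
      rcases Finset.mem_insert.mp hqQ with rfl | h
      · exact absurd (Nat.dvd_of_mem_primeFactors hq) (Nat.not_dvd_ordCompl hp hd0)
      · exact h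
    have himg : ∑ d ∈ A, gg d / (d : ℝ) = ∑ km ∈ A.image φ, u km := by
      rw [Finset.sum_image hinj]
      exact Finset.sum_congr rfl hterm
    have hstep : ∑ km ∈ A.image φ, u km ≤ ∑ km ∈ Finset.range (N + 1) ×ˢ B, u km := by
      refine Finset.sum_le_sum_of_subset_of_nonneg hsub fun km hkm _ => ?_
      simp only [Finset.mem_product, Finset.mem_range, hB, Finset.mem_filter,
        Finset.mem_Icc] at hkm
      have h1 : (0:ℝ) ≤ gg (p ^ km.1) := hg0 _ (pow_ne_zero _ hp.pos.ne')
      have h2 : (0:ℝ) ≤ gg km.2 := hg0 _ (by omega)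
      have h3 : (0:ℝ) ≤ ((p ^ km.1 : ℕ) : ℝ) := by positivity
      have h4 : (0:ℝ) ≤ (km.2 : ℝ) := by positivity
      rw [hu]
      positivity
    have hprod : ∑ km ∈ Finset.range (N + 1) ×ˢ B, u km
        = (∑ k ∈ Finset.range (N + 1), gg (p ^ k) / ((p ^ k : ℕ) : ℝ))
          * ∑ m ∈ B, gg m / (m : ℝ) := by
      rw [Finset.sum_mul_sum]
      rw [Finset.sum_product]
    have hnn : (0:ℝ) ≤ ∑ k ∈ Finset.range (N + 1), gg (p ^ k) / ((p ^ k : ℕ) : ℝ) := by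
      refine Finset.sum_nonneg fun k _ => ?_
      have h1 : (0:ℝ) ≤ gg (p ^ k) := hg0 _ (pow_ne_zero _ hp.pos.ne')
      positivity
    rw [Finset.prod_insert hpQ]
    calc ∑ d ∈ A, gg d / (d : ℝ) ≤ (∑ k ∈ Finset.range (N + 1), gg (p ^ k) / ((p ^ k : ℕ) : ℝ))
          * ∑ m ∈ B, gg m / (m : ℝ) := by rw [himg, ← hprod] at *; exact hstep
      _ ≤ _ := mul_le_mul_of_nonneg_left ih hnn

lemma cheb (M : ℕ) : ∑ p ∈ Nat.primesBelow (M + 1), Real.log p ≤ (M : ℝ) * Real.log 4 := by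
  have hset : Nat.primesBelow (M + 1) = (Finset.range (M + 1)).filter Nat.Prime := rfl
  have h1 : ∑ p ∈ Nat.primesBelow (M + 1), Real.log p = Real.log ((primorial M : ℕ) : ℝ) := by
    rw [primorial, Nat.cast_prod, Real.log_prod]
    · rfl
    · intro p hp
      have hp' : p.Prime := (Finset.mem_filter.mp hp).2
      exact Nat.cast_ne_zero.mpr hp'.pos.ne'
  rw [h1]
  have h2 : ((primorial M : ℕ) : ℝ) ≤ ((4 ^ M : ℕ) : ℝ) := by
    exact_mod_cast primorial_le_4_pow M
  have h3 : (0:ℝ) < ((primorial M : ℕ) : ℝ) := by exact_mod_cast primorial_pos M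
  calc Real.log ((primorial M : ℕ) : ℝ) ≤ Real.log ((4 ^ M : ℕ) : ℝ) :=
        Real.log_le_log h3 h2
    _ = (M : ℝ) * Real.log 4 := by
        rw [Nat.cast_pow, Real.log_pow]
        norm_num

lemma dyadic (J : ℕ) :
    ∑ p ∈ Nat.primesBelow (2 ^ J), Real.log p / p ≤ (J : ℝ) * (4 * Real.log 2) := by
  induction J with
  | zero =>
    rw [pow_zero, show Nat.primesBelow 1 = ∅ from rfl]
    simp
  | succ J ih =>
    have hsub : Nat.primesBelow (2 ^ J) ⊆ Nat.primesBelow (2 ^ (J + 1)) := by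
      intro p hp
      rw [Nat.mem_primesBelow] at *
      exact ⟨lt_of_lt_of_le hp.1 (Nat.pow_le_pow_right (by norm_num) (Nat.le_succ J)), hp.2⟩
    rw [← Finset.sum_sdiff hsub]
    have hcheb : ∑ p ∈ Nat.primesBelow (2 ^ (J + 1)), Real.log p
        ≤ ((2 ^ (J + 1) : ℕ) : ℝ) * Real.log 4 := by
      have h := cheb (2 ^ (J + 1) - 1)
      have he : (2 ^ (J + 1) - 1) + 1 = 2 ^ (J + 1) := by
        have : 1 ≤ 2 ^ (J + 1) := Nat.one_le_two_pow
        omega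
      rw [he] at h
      refine h.trans ?_
      have : ((2 ^ (J + 1) - 1 : ℕ) : ℝ) ≤ ((2 ^ (J + 1) : ℕ) : ℝ) := by
        exact_mod_cast Nat.sub_le _ 1
      have hl4 : (0:ℝ) ≤ Real.log 4 := Real.log_nonneg (by norm_num)
      exact mul_le_mul_of_nonneg_right this hl4
    have hlog4 : Real.log 4 = 2 * Real.log 2 := by
      rw [show (4:ℝ) = 2 ^ 2 by norm_num, Real.log_pow]
      push_cast; ring
    have hdiff : ∑ p ∈ Nat.primesBelow (2 ^ (J + 1)) \ Nat.primesBelow (2 ^ J), Real.log p / p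
        ≤ 4 * Real.log 2 := by
      have h2J : (0:ℝ) < ((2 ^ J : ℕ) : ℝ) := by positivity
      have hstep1 : ∑ p ∈ Nat.primesBelow (2 ^ (J + 1)) \ Nat.primesBelow (2 ^ J),
          Real.log p / p
          ≤ ∑ p ∈ Nat.primesBelow (2 ^ (J + 1)) \ Nat.primesBelow (2 ^ J),
            Real.log p / ((2 ^ J : ℕ) : ℝ) := by
        refine Finset.sum_le_sum fun p hp => ?_
        rw [Finset.mem_sdiff, Nat.mem_primesBelow] at hp
        have hp2 : 2 ^ J ≤ p := by
          by_contra hlt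
          exact hp.2 (Nat.mem_primesBelow.mpr ⟨by omega, hp.1.2⟩)
        have hplog : 0 ≤ Real.log p := Real.log_nonneg (by exact_mod_cast hp.1.2.one_lt.le)
        have hpr : ((2 ^ J : ℕ) : ℝ) ≤ (p : ℝ) := by exact_mod_cast hp2
        gcongr
      have hstep2 : ∑ p ∈ Nat.primesBelow (2 ^ (J + 1)) \ Nat.primesBelow (2 ^ J),
          Real.log p / ((2 ^ J : ℕ) : ℝ)
          = (∑ p ∈ Nat.primesBelow (2 ^ (J + 1)) \ Nat.primesBelow (2 ^ J), Real.log p)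
            / ((2 ^ J : ℕ) : ℝ) := by
        rw [Finset.sum_div]
      have hstep3 : ∑ p ∈ Nat.primesBelow (2 ^ (J + 1)) \ Nat.primesBelow (2 ^ J), Real.log p
          ≤ ∑ p ∈ Nat.primesBelow (2 ^ (J + 1)), Real.log p := by
        refine Finset.sum_le_sum_of_subset_of_nonneg Finset.sdiff_subset fun p hp _ => ?_
        exact Real.log_nonneg (by
          exact_mod_cast (Nat.prime_of_mem_primesBelow hp).one_lt.le)
      calc ∑ p ∈ Nat.primesBelow (2 ^ (J + 1)) \ Nat.primesBelow (2 ^ J), Real.log p / p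
          ≤ (∑ p ∈ Nat.primesBelow (2 ^ (J + 1)), Real.log p) / ((2 ^ J : ℕ) : ℝ) := by
            refine hstep1.trans ?_
            rw [hstep2]
            gcongr
        _ ≤ (((2 ^ (J + 1) : ℕ) : ℝ) * Real.log 4) / ((2 ^ J : ℕ) : ℝ) := by
            gcongr
        _ = 4 * Real.log 2 := by
            push_cast
            rw [hlog4]
            field_simp
            ring
    have hsmall : 0 ≤ Real.log 2 := Real.log_nonneg (by norm_num)
    push_cast
    linarith [ih, hdiff]

lemma sum_logp {y : ℝ} (hy : 2 ≤ y) (M : ℕ) :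
    ∑ p ∈ (Nat.primesBelow M).filter (fun p : ℕ => (p : ℝ) ≤ y), Real.log p / p
      ≤ 9 * Real.log y := by
  set J := ⌊Real.logb 2 y⌋₊ + 1 with hJ
  have hy0 : (0:ℝ) < y := by linarith
  have hlogb1 : 1 ≤ Real.logb 2 y := by
    rw [Real.le_logb_iff_rpow_le (by norm_num) hy0]
    simpa using hy
  have hyJ : y < ((2 ^ J : ℕ) : ℝ) := by
    have h1 : Real.logb 2 y < (J : ℝ) := by
      rw [hJ]
      push_cast
      exact Nat.lt_floor_add_one _
    have := (Real.logb_lt_iff_lt_rpow (by norm_num) hy0).mp h1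
    calc y < (2:ℝ) ^ (J:ℝ) := this
      _ = ((2 ^ J : ℕ) : ℝ) := by rw [Real.rpow_natCast]; push_cast; ring
  have hsub : (Nat.primesBelow M).filter (fun p : ℕ => (p : ℝ) ≤ y) ⊆ Nat.primesBelow (2 ^ J) := by
    intro p hp
    rw [Finset.mem_filter, Nat.mem_primesBelow] at hp
    rw [Nat.mem_primesBelow]
    refine ⟨?_, hp.1.2⟩
    by_contra h
    push_neg at h
    have : ((2 ^ J : ℕ) : ℝ) ≤ (p : ℝ) := by exact_mod_cast h
    linarith [hp.2]
  have hmono : ∑ p ∈ (Nat.primesBelow M).filter (fun p : ℕ => (p : ℝ) ≤ y), Real.log p / p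
      ≤ ∑ p ∈ Nat.primesBelow (2 ^ J), Real.log p / p := by
    refine Finset.sum_le_sum_of_subset_of_nonneg hsub fun p hp _ => ?_
    have h1 : (0:ℝ) ≤ Real.log p :=
      Real.log_nonneg (by exact_mod_cast (Nat.prime_of_mem_primesBelow hp).one_lt.le)
    positivity
  have hlog2 : (0:ℝ) < Real.log 2 := Real.log_pos (by norm_num)
  have hJle : (J : ℝ) ≤ 2 * Real.logb 2 y := by
    have hfl : (⌊Real.logb 2 y⌋₊ : ℝ) ≤ Real.logb 2 y := Nat.floor_le (by linarith)
    push_cast [hJ]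
    linarith
  calc ∑ p ∈ (Nat.primesBelow M).filter (fun p : ℕ => (p : ℝ) ≤ y), Real.log p / p
      ≤ (J : ℝ) * (4 * Real.log 2) := hmono.trans (dyadic J)
    _ ≤ (2 * Real.logb 2 y) * (4 * Real.log 2) := by
        have h4 : (0:ℝ) ≤ 4 * Real.log 2 := by positivity
        exact mul_le_mul_of_nonneg_right hJle h4
    _ = 8 * Real.log y := by
        rw [Real.logb]
        field_simp
        ring
    _ ≤ 9 * Real.log y := by
        have := logy_pos hy
        linarith

lemma exp_half_lt : Real.exp 2⁻¹ < 1.65 := by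
  have h := Real.exp_one_lt_d9
  have hsq : Real.exp 2⁻¹ * Real.exp 2⁻¹ = Real.exp 1 := by
    rw [← Real.exp_add]; norm_num
  nlinarith [Real.exp_pos 2⁻¹]

lemma Floc_eq_one {y : ℝ} {p : ℕ} (hp : p.Prime) (hpy : ¬ (p : ℝ) ≤ y) (N : ℕ) :
    ∑ k ∈ Finset.range (N + 1), gf y (p ^ k) / ((p ^ k : ℕ) : ℝ) = 1 := by
  rw [Finset.sum_range_succ']
  have h0 : gf y (p ^ 0) / ((p ^ 0 : ℕ) : ℝ) = 1 := by
    simp [gf_one]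
  have hk : ∀ k ∈ Finset.range N, gf y (p ^ (k + 1)) / ((p ^ (k + 1) : ℕ) : ℝ) = 0 := by
    intro k _
    rw [gf_prime_pow hp (Nat.succ_ne_zero k), gl, if_neg hpy, zero_div]
  rw [Finset.sum_congr rfl hk, h0, Finset.sum_const, smul_zero, zero_add]

lemma Floc_le {y : ℝ} (hy : 2 ≤ y) {p : ℕ} (hp : p.Prime) (hpy : (p : ℝ) ≤ y) (N : ℕ) :
    ∑ k ∈ Finset.range (N + 1), gf y (p ^ k) / ((p ^ k : ℕ) : ℝ)
      ≤ Real.exp (10 * al y * Real.log p / p) := by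
  set P : ℝ := (p : ℝ) with hPdef
  have hP2 : (2:ℝ) ≤ P := by rw [hPdef]; exact_mod_cast hp.two_le
  have hP0 : (0:ℝ) < P := by linarith
  set α := al y with hα
  set t := α * Real.log P with ht
  set a := P ^ α with ha
  have hLP : (0:ℝ) ≤ Real.log P := Real.log_nonneg (by linarith)
  have ht0 : 0 ≤ t := mul_nonneg (al_pos hy).le hLP
  have hthalf : t ≤ 2⁻¹ := by
    rw [ht, hα, al]
    have hLy := logy_pos hy
    have hle : Real.log P ≤ Real.log y := Real.log_le_log hP0 hpy
    rw [mul_comm, ← div_eq_mul_inv, div_le_iff₀ (by linarith : (0:ℝ) < 2 * Real.log y)]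
    linarith
  have haexp : a = Real.exp t := by
    rw [ha, ht, Real.rpow_def_of_pos hP0]
    ring_nf
  have ha1 : 1 ≤ a := by
    rw [haexp]
    exact Real.one_le_exp ht0
  have haE : a ≤ 1.65 := by
    rw [haexp]
    calc Real.exp t ≤ Real.exp 2⁻¹ := Real.exp_le_exp.mpr hthalf
      _ ≤ 1.65 := exp_half_lt.le
  have hamt : a - 1 ≤ t * a := by
    have h := Real.add_one_le_exp (-t)
    rw [Real.exp_neg, ← haexp] at h
    have ha0 : 0 < a := by linarith
    have := mul_le_mul_of_nonneg_right h ha0.le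
    rw [inv_mul_cancel₀ ha0.ne'] at this
    nlinarith
  have hPa : 0 < P - a := by nlinarith
  set β := P ^ (α - 1) with hβ
  have hβa : β = a / P := by
    rw [hβ, ha, Real.rpow_sub hP0, Real.rpow_one]
  have hβ0 : 0 ≤ β := Real.rpow_nonneg hP0.le _
  have hβ1 : β < 1 := by
    rw [hβa]
    rw [div_lt_one hP0]
    linarith
  have hc : P ^ (-α) = a⁻¹ := by
    rw [Real.rpow_neg hP0.le, ha]
  -- rewrite each term with k ≥ 1
  have hterm : ∀ k : ℕ, gf y (p ^ (k + 1)) / ((p ^ (k + 1) : ℕ) : ℝ)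
      = β ^ (k + 1) * (1 - P ^ (-α)) := by
    intro k
    set K : ℝ := ((k + 1 : ℕ) : ℝ) with hK
    have hcast : ((p ^ (k + 1) : ℕ) : ℝ) = P ^ K := by
      rw [hK, Real.rpow_natCast]
      push_cast
      ring
    have hβK : β ^ (k + 1) = P ^ ((α - 1) * K) := by
      rw [Real.rpow_mul hP0.le, Real.rpow_natCast]
    rw [gf_prime_pow hp (Nat.succ_ne_zero k), gl, if_pos hpy, hcast, hβK,
      ← hPdef, ← hK]
    rw [sub_div, ← Real.rpow_sub hP0, ← Real.rpow_sub hP0]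
    rw [mul_one_sub, ← Real.rpow_add hP0 ((α - 1) * K) (-α)]
    congr 1
    · congr 1; rw [hα]; ring
    · congr 1; rw [hα]; ring
  rw [Finset.sum_range_succ']
  have h0 : gf y (p ^ 0) / ((p ^ 0 : ℕ) : ℝ) = 1 := by simp [gf_one]
  rw [Finset.sum_congr rfl (fun k _ => hterm k), h0]
  clear_value P α t a β
  have hgeo : ∑ k ∈ Finset.range N, β ^ (k + 1) * (1 - P ^ (-α))
      ≤ (a - 1) / (P - a) := by
    have hsum : ∑ k ∈ Finset.range N, β ^ (k + 1) * (1 - P ^ (-α))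
        = (1 - P ^ (-α)) * β * ∑ k ∈ Finset.range N, β ^ k := by
      rw [Finset.mul_sum]
      refine Finset.sum_congr rfl fun k _ => ?_
      rw [pow_succ]
      ring
    rw [hsum]
    have hgs : ∑ k ∈ Finset.range N, β ^ k ≤ 1 / (1 - β) := by
      rcases eq_or_ne β 1 with h1 | hne
      · exact absurd h1 (by linarith)
      rw [geom_sum_eq hne]
      have hβn : 0 ≤ β ^ N := pow_nonneg hβ0 N
      have hflip : (β ^ N - 1) / (β - 1) = (1 - β ^ N) / (1 - β) := by
        rw [← neg_div_neg_eq]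
        ring_nf
      rw [hflip, div_le_div_iff₀ (by linarith) (by linarith)]
      nlinarith
    have hco : 0 ≤ (1 - P ^ (-α)) * β := by
      have ha0 : (0:ℝ) < a := by linarith
      have : P ^ (-α) ≤ 1 := by
        rw [hc, inv_eq_one_div, div_le_one ha0]
        exact ha1
      nlinarith
    calc (1 - P ^ (-α)) * β * ∑ k ∈ Finset.range N, β ^ k
        ≤ (1 - P ^ (-α)) * β * (1 / (1 - β)) := mul_le_mul_of_nonneg_left hgs hco
      _ = (a - 1) / (P - a) := by
          rw [hc, hβa]
          have ha0 : (0:ℝ) < a := by linarith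
          field_simp
  have hfrac : (a - 1) / (P - a) ≤ 10 * α * Real.log P / P := by
    rw [div_le_div_iff₀ hPa hP0]
    have h825 : a ≤ (33/40) * P := by linarith
    have h1 : (a - 1) * P ≤ (1.65 * t) * P := by
      have hta : t * a ≤ t * 1.65 := mul_le_mul_of_nonneg_left haE ht0
      have hq : a - 1 ≤ 1.65 * t := by linarith
      exact mul_le_mul_of_nonneg_right hq hP0.le
    have h2 : 10 * α * Real.log P = 10 * t := by rw [ht]; ring
    rw [h2]
    have h3 : 0 ≤ t * (8.35 * P - 10 * a) := mul_nonneg ht0 (by linarith)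
    nlinarith [h1, h3]
  calc ∑ k ∈ Finset.range N, β ^ (k + 1) * (1 - P ^ (-α)) + 1
      ≤ (a - 1) / (P - a) + 1 := by linarith [hgeo]
    _ ≤ 10 * α * Real.log P / P + 1 := by linarith [hfrac]
    _ ≤ Real.exp (10 * α * Real.log P / P) := by
        have := Real.add_one_le_exp (10 * α * Real.log P / P)
        linarith

/-- Uniformly for `2 ≤ y ≤ z ≤ x`, the number of `n ≤ x` whose `y`-smooth part exceeds `z`
is `≪ x · exp(−(log z)/(2 log y))`, with an absolute implied constant. -/
theorem stmt_1 :
    ∃ C : ℝ, 0 < C ∧ ∀ x y z : ℝ, 2 ≤ y → y ≤ z → z ≤ x →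
      (((Finset.Icc 1 ⌊x⌋₊).filter
          (fun n => z < (smoothPart y n : ℝ))).card : ℝ)
        ≤ C * x * Real.exp (-(Real.log z) / (2 * Real.log y)) := by
  refine ⟨Real.exp 45, Real.exp_pos 45, ?_⟩
  intro x y z hy2 hyz hzx
  set N := ⌊x⌋₊ with hN
  have hz0 : (0:ℝ) < z := by linarith
  have hx0 : (0:ℝ) < x := by linarith
  have hα := al_pos hy2
  have hLy := logy_pos hy2
  have hzα : (0:ℝ) < z ^ al y := Real.rpow_pos_of_pos hz0 _
  set Q := Nat.primesBelow (N + 1) with hQ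
  -- Step 1 : card ≤ (∑ S^α) / z^α
  have step1 : (((Finset.Icc 1 N).filter (fun n => z < (smoothPart y n : ℝ))).card : ℝ)
      ≤ (∑ n ∈ Finset.Icc 1 N, (smoothPart y n : ℝ) ^ al y) / z ^ al y := by
    rw [Finset.sum_div]
    calc (((Finset.Icc 1 N).filter (fun n => z < (smoothPart y n : ℝ))).card : ℝ)
        = ∑ _n ∈ (Finset.Icc 1 N).filter (fun n => z < (smoothPart y n : ℝ)), (1:ℝ) := by
          simp
      _ ≤ ∑ n ∈ (Finset.Icc 1 N).filter (fun n => z < (smoothPart y n : ℝ)),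
            (smoothPart y n : ℝ) ^ al y / z ^ al y := by
          refine Finset.sum_le_sum fun n hn => ?_
          have hzn : z < (smoothPart y n : ℝ) := (Finset.mem_filter.mp hn).2
          rw [le_div_iff₀ hzα, one_mul]
          exact Real.rpow_le_rpow hz0.le hzn.le hα.le
      _ ≤ ∑ n ∈ Finset.Icc 1 N, (smoothPart y n : ℝ) ^ al y / z ^ al y := by
          refine Finset.sum_le_sum_of_subset_of_nonneg (Finset.filter_subset _ _)
            fun n _ _ => ?_
          positivity
  -- Step 2 : ∑ S^α ≤ x * exp 45
  have hmul : ∀ p k m : ℕ, p.Prime → ¬ p ∣ m → m ≠ 0 →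
      gf y (p ^ k * m) = gf y (p ^ k) * gf y m := by
    intro p k m hp hpm hm
    have hcop : Nat.Coprime (p ^ k) m :=
      Nat.Coprime.pow_left k ((Nat.Prime.coprime_iff_not_dvd hp).mpr hpm)
    exact GA_mult.map_mul_of_coprime hcop
  have hfilterall : (Finset.Icc 1 N).filter (fun d => d.primeFactors ⊆ Q)
      = Finset.Icc 1 N := by
    refine Finset.filter_true_of_mem fun d hd => ?_
    intro q hq
    rw [Finset.mem_Icc] at hd
    have hq1 : q ∣ d := Nat.dvd_of_mem_primeFactors hq
    have hq2 := Nat.le_of_dvd (by omega) hq1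
    rw [hQ, Nat.mem_primesBelow]
    exact ⟨by omega, Nat.prime_of_mem_primeFactors hq⟩
  have hsp := sum_le_prod_local (gf y) (fun d _ => gf_nonneg hy2 d) (gf_one y) hmul N
    Q (fun p hp => Nat.prime_of_mem_primesBelow hp)
  rw [hfilterall] at hsp
  have hprod1 : ∏ p ∈ Q, ∑ k ∈ Finset.range (N + 1), gf y (p ^ k) / ((p ^ k : ℕ) : ℝ)
      ≤ ∏ p ∈ Q, (if (p : ℝ) ≤ y then Real.exp (10 * al y * Real.log p / p) else 1) := by
    refine Finset.prod_le_prod (fun p hp => ?_) (fun p hp => ?_)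
    · refine Finset.sum_nonneg fun k _ => ?_
      have := gf_nonneg hy2 (p ^ k)
      positivity
    · have hp' := Nat.prime_of_mem_primesBelow hp
      by_cases hpy : (p : ℝ) ≤ y
      · rw [if_pos hpy]; exact Floc_le hy2 hp' hpy N
      · rw [if_neg hpy, Floc_eq_one hp' hpy N]
  have hprod2 : ∏ p ∈ Q, (if (p : ℝ) ≤ y then Real.exp (10 * al y * Real.log p / p) else 1)
      = Real.exp (∑ p ∈ Q.filter (fun p : ℕ => (p : ℝ) ≤ y), 10 * al y * Real.log p / p) := by
    rw [← Finset.prod_filter, Real.exp_sum]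
  have hsum45 : ∑ p ∈ Q.filter (fun p : ℕ => (p : ℝ) ≤ y), 10 * al y * Real.log p / p ≤ 45 := by
    have h9 := sum_logp hy2 (N + 1)
    have heq : ∑ p ∈ Q.filter (fun p : ℕ => (p : ℝ) ≤ y), 10 * al y * Real.log p / p
        = 10 * al y * ∑ p ∈ Q.filter (fun p : ℕ => (p : ℝ) ≤ y), Real.log p / p := by
      rw [Finset.mul_sum]
      exact Finset.sum_congr rfl fun p _ => by ring
    rw [heq]
    have h10 : (0:ℝ) ≤ 10 * al y := by positivity
    calc 10 * al y * ∑ p ∈ Q.filter (fun p : ℕ => (p : ℝ) ≤ y), Real.log p / p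
        ≤ 10 * al y * (9 * Real.log y) := mul_le_mul_of_nonneg_left h9 h10
      _ = 45 := by
          rw [al]
          field_simp
          ring
  have hprod : ∏ p ∈ Q, ∑ k ∈ Finset.range (N + 1), gf y (p ^ k) / ((p ^ k : ℕ) : ℝ)
      ≤ Real.exp 45 := by
    refine hprod1.trans ?_
    rw [hprod2]
    exact Real.exp_le_exp.mpr hsum45
  have step2 : ∑ n ∈ Finset.Icc 1 N, (smoothPart y n : ℝ) ^ al y ≤ x * Real.exp 45 := by
    have hAeq : ∑ n ∈ Finset.Icc 1 N, (smoothPart y n : ℝ) ^ al y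
        = ∑ n ∈ Finset.Icc 1 N, ∑ d ∈ n.divisors, gf y d := by
      refine Finset.sum_congr rfl fun n hn => ?_
      rw [Finset.mem_Icc] at hn
      exact claimA n (by omega)
    rw [hAeq, swap_sum]
    have hle1 : ∑ d ∈ Finset.Icc 1 N, gf y d * ((N / d : ℕ) : ℝ)
        ≤ (N : ℝ) * ∑ d ∈ Finset.Icc 1 N, gf y d / d := by
      rw [Finset.mul_sum]
      refine Finset.sum_le_sum fun d hd => ?_
      have h1 : ((N / d : ℕ) : ℝ) ≤ (N : ℝ) / d := Nat.cast_div_le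
      calc gf y d * ((N / d : ℕ) : ℝ) ≤ gf y d * ((N : ℝ) / d) :=
            mul_le_mul_of_nonneg_left h1 (gf_nonneg hy2 d)
        _ = (N : ℝ) * (gf y d / d) := by ring
    have hNx : (N : ℝ) ≤ x := Nat.floor_le hx0.le
    calc ∑ d ∈ Finset.Icc 1 N, gf y d * ((N / d : ℕ) : ℝ)
        ≤ (N : ℝ) * ∑ d ∈ Finset.Icc 1 N, gf y d / d := hle1
      _ ≤ (N : ℝ) * Real.exp 45 := by
          refine mul_le_mul_of_nonneg_left (hsp.trans hprod) ?_
          positivity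
      _ ≤ x * Real.exp 45 := mul_le_mul_of_nonneg_right hNx (Real.exp_pos 45).le
  -- combine
  have hfinal : (∑ n ∈ Finset.Icc 1 N, (smoothPart y n : ℝ) ^ al y) / z ^ al y
      ≤ (x * Real.exp 45) / z ^ al y := by gcongr
  have hzrw : (x * Real.exp 45) / z ^ al y
      = Real.exp 45 * x * Real.exp (-(Real.log z) / (2 * Real.log y)) := by
    rw [Real.rpow_def_of_pos hz0, al, div_eq_mul_inv, ← Real.exp_neg,
      show -(Real.log z * (2 * Real.log y)⁻¹) = -(Real.log z) / (2 * Real.log y) by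
        rw [div_eq_mul_inv]; ring]
    ring
  calc (((Finset.Icc 1 N).filter (fun n => z < (smoothPart y n : ℝ))).card : ℝ)
      ≤ (∑ n ∈ Finset.Icc 1 N, (smoothPart y n : ℝ) ^ al y) / z ^ al y := step1
    _ ≤ (x * Real.exp 45) / z ^ al y := hfinal
    _ = Real.exp 45 * x * Real.exp (-(Real.log z) / (2 * Real.log y)) := hzrw
end

section
/- Let f be a real additive arithmetic function such that the three series ∑_{|f(p)|>1} 1/p, ∑_{|f(p)|≤1} f(p)²/p, and ∑_{|f(p)|≤1} f(p)/p all converge. Then for each real r ≥ 0, the infinite product φ_{F_r}(θ) := ∏_p ( 1 + (1−1/p) ∑_{ν ≥ 1} (e^{iθ f(p^ν)} − 1)/(p^{ν−1}(p−1+r)) ) converges for every real θ and defines the characteristic function of a probability distribution F_r on ℝ. -/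
open Finset Real MeasureTheory Complex

/-- The local factor at the prime `p` of the Erdős–Wintner type product:
`1 + (1−1/p) ∑_{ν ≥ 1} (e^{iθ f(p^ν)} − 1)/(p^{ν−1}(p−1+r))`. -/
noncomputable def localFactor (f : ℕ → ℝ) (r θ : ℝ) (p : Nat.Primes) : ℂ :=
  1 + (1 - 1 / ((p : ℕ) : ℂ)) *
    ∑' ν : ℕ, (Complex.exp (θ * f ((p : ℕ) ^ (ν + 1)) * Complex.I) - 1) /
      (((p : ℕ) : ℂ) ^ ν * (((p : ℕ) : ℂ) - 1 + (r : ℂ)))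

namespace EWProof

noncomputable def mIco : Measure ℝ := volume.restrict (Set.Ico (0:ℝ) 1)

instance : IsProbabilityMeasure mIco :=
  ⟨by simp [mIco, Real.volume_Ico]⟩

noncomputable def cdfw (w : ℕ → ℝ) (k : ℕ) : ℝ := ∑ j ∈ Finset.range k, w j

noncomputable def digitw (w : ℕ → ℝ) (x : ℝ) : ℕ := sSup {k | cdfw w k ≤ x}

noncomputable def remw (w : ℕ → ℝ) (x : ℝ) : ℝ :=
  (x - cdfw w (digitw w x)) / w (digitw w x)

section pmf
variable {w : ℕ → ℝ}

lemma cdfw_zero : cdfw w 0 = 0 := by simp [cdfw]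

lemma cdfw_succ (k : ℕ) : cdfw w (k+1) = cdfw w k + w k := Finset.sum_range_succ _ _

lemma cdfw_mono (hw0 : ∀ k, 0 ≤ w k) : Monotone (cdfw w) := by
  intro a b hab
  exact Finset.sum_le_sum_of_subset_of_nonneg (Finset.range_subset_range.2 hab)
    (fun i _ _ => hw0 i)

lemma cdfw_nonneg (hw0 : ∀ k, 0 ≤ w k) (k : ℕ) : 0 ≤ cdfw w k :=
  Finset.sum_nonneg fun i _ => hw0 i

lemma cdfw_le_one (hw0 : ∀ k, 0 ≤ w k) (hw1 : HasSum w 1) (k : ℕ) : cdfw w k ≤ 1 :=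
  sum_le_hasSum (Finset.range k) (fun i _ => hw0 i) hw1

lemma digitw_spec (hw0 : ∀ k, 0 ≤ w k) (hw1 : HasSum w 1) {x : ℝ}
    (hx0 : 0 ≤ x) (hx1 : x < 1) :
    cdfw w (digitw w x) ≤ x ∧ x < cdfw w (digitw w x + 1) := by
  have hne : {k | cdfw w k ≤ x}.Nonempty := ⟨0, by simpa [cdfw_zero] using hx0⟩
  have hbdd : BddAbove {k | cdfw w k ≤ x} := by
    have hev : ∀ᶠ n in Filter.atTop, x < ∑ j ∈ Finset.range n, w j :=
      hw1.tendsto_sum_nat.eventually (eventually_gt_nhds hx1)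
    obtain ⟨N, hN⟩ := hev.exists_forall_of_atTop
    refine ⟨N, fun k hk => ?_⟩
    by_contra hkN
    push_neg at hkN
    exact absurd hk (not_le.2 (hN k hkN.le))
  have hmem : digitw w x ∈ {k | cdfw w k ≤ x} := Nat.sSup_mem hne hbdd
  refine ⟨hmem, ?_⟩
  by_contra hlt
  push_neg at hlt
  have : digitw w x + 1 ≤ digitw w x := le_csSup hbdd hlt
  omega

lemma digitw_eq_iff (hw0 : ∀ k, 0 ≤ w k) (hw1 : HasSum w 1) {x : ℝ}
    (hx0 : 0 ≤ x) (hx1 : x < 1) (k : ℕ) :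
    digitw w x = k ↔ cdfw w k ≤ x ∧ x < cdfw w (k+1) := by
  obtain ⟨h1, h2⟩ := digitw_spec hw0 hw1 hx0 hx1
  constructor
  · rintro rfl; exact ⟨h1, h2⟩
  · rintro ⟨hk1, hk2⟩
    rcases lt_trichotomy (digitw w x) k with h | h | h
    · have : cdfw w (digitw w x + 1) ≤ cdfw w k := cdfw_mono hw0 h
      linarith
    · exact h
    · have : cdfw w (k+1) ≤ cdfw w (digitw w x) := cdfw_mono hw0 h
      linarith

lemma digitw_junk {x : ℝ} (hw0 : ∀ k, 0 ≤ w k) (hw1 : HasSum w 1)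
    (hx : x ∉ Set.Ico (0:ℝ) 1) : digitw w x = 0 := by
  rw [Set.mem_Ico, not_and_or] at hx
  push_neg at hx
  rcases hx with hx | hx
  · have : {k | cdfw w k ≤ x} = ∅ := by
      ext k; simp only [Set.mem_setOf_eq, Set.mem_empty_iff_false, iff_false, not_le]
      exact lt_of_lt_of_le hx (cdfw_nonneg hw0 k)
    rw [digitw, this, csSup_empty]; rfl
  · have huniv : {k | cdfw w k ≤ x} = Set.univ := by
      ext k; simp only [Set.mem_setOf_eq, Set.mem_univ, iff_true]
      exact le_trans (cdfw_le_one hw0 hw1 k) hx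
    have : ¬ BddAbove {k | cdfw w k ≤ x} := by
      rw [huniv]; exact fun h => Set.Infinite.not_bddAbove Set.infinite_univ h
    rw [digitw, csSup_of_not_bddAbove this, csSup_empty]; rfl

lemma digitw_preimage (hw0 : ∀ k, 0 ≤ w k) (hw1 : HasSum w 1) (k : ℕ) :
    digitw w ⁻¹' {k} ∩ Set.Ico (0:ℝ) 1 = Set.Ico (cdfw w k) (cdfw w (k+1)) := by
  ext x
  simp only [Set.mem_inter_iff, Set.mem_preimage, Set.mem_singleton_iff, Set.mem_Ico]
  constructor
  · rintro ⟨hd, hx0, hx1⟩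
    exact (digitw_eq_iff hw0 hw1 hx0 hx1 k).1 hd
  · rintro ⟨h1, h2⟩
    have hx0 : 0 ≤ x := le_trans (cdfw_nonneg hw0 k) h1
    have hx1 : x < 1 := lt_of_lt_of_le h2 (cdfw_le_one hw0 hw1 (k+1))
    exact ⟨(digitw_eq_iff hw0 hw1 hx0 hx1 k).2 ⟨h1, h2⟩, hx0, hx1⟩

lemma measurable_digitw (hw0 : ∀ k, 0 ≤ w k) (hw1 : HasSum w 1) :
    Measurable (digitw w) := by
  apply measurable_to_countable'
  intro k
  have : digitw w ⁻¹' {k} =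
      Set.Ico (cdfw w k) (cdfw w (k+1)) ∪
        (if k = 0 then (Set.Ico (0:ℝ) 1)ᶜ else ∅) := by
    ext x
    by_cases hx : x ∈ Set.Ico (0:ℝ) 1
    · have h1 : x ∈ digitw w ⁻¹' {k} ↔ x ∈ Set.Ico (cdfw w k) (cdfw w (k+1)) := by
        constructor
        · intro h; have := (digitw_preimage hw0 hw1 k) ▸ Set.mem_inter h hx
          exact this
        · intro h
          have := (digitw_preimage hw0 hw1 k).symm ▸ h
          exact this.1
      simp only [Set.mem_union, h1]
      constructor
      · exact Or.inl
      · rintro (h | h)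
        · exact h
        · split_ifs at h with hk
          · exact absurd hx (by simpa using h)
          · simp at h
    · have hd := digitw_junk hw0 hw1 hx
      have hnot : x ∉ Set.Ico (cdfw w k) (cdfw w (k+1)) := by
        intro hmem
        have := digitw_preimage hw0 hw1 k
        have : x ∈ digitw w ⁻¹' {k} ∩ Set.Ico (0:ℝ) 1 := this.symm ▸ hmem
        exact hx this.2
      simp only [Set.mem_preimage, Set.mem_singleton_iff, hd, Set.mem_union, hnot, false_or]
      constructor
      · rintro rfl; simp [hx]
      · intro h
        split_ifs at h with hk
        · exact hk.symm
        · simp at h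
  rw [this]
  apply MeasurableSet.union measurableSet_Ico
  split_ifs
  · exact measurableSet_Ico.compl
  · exact MeasurableSet.empty

lemma measurable_remw (hw0 : ∀ k, 0 ≤ w k) (hw1 : HasSum w 1) :
    Measurable (remw w) := by
  have hd := measurable_digitw hw0 hw1
  exact ((measurable_id.sub ((measurable_from_top (f := cdfw w)).comp hd)).div
    ((measurable_from_top (f := w)).comp hd))

end pmf

lemma mIco_apply {s : Set ℝ} (hs : MeasurableSet s) :
    mIco s = volume (s ∩ Set.Ico (0:ℝ) 1) :=
  Measure.restrict_apply hs

lemma meas_digit_rem (hw0 : ∀ k, 0 ≤ w k) (hw1 : HasSum w 1) (k : ℕ)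
    {B : Set ℝ} (hB : MeasurableSet B) :
    mIco (digitw w ⁻¹' {k} ∩ remw w ⁻¹' B) = ENNReal.ofReal (w k) * mIco B := by
  have hd := measurable_digitw hw0 hw1
  have hrm := measurable_remw hw0 hw1
  have hmeas : MeasurableSet (digitw w ⁻¹' {k} ∩ remw w ⁻¹' B) :=
    (hd (measurableSet_singleton k)).inter (hrm hB)
  rw [mIco_apply hmeas, mIco_apply hB]
  rcases eq_or_lt_of_le (hw0 k) with hwk | hwk
  · -- w k = 0 : the fiber piece is empty
    have : (digitw w ⁻¹' {k} ∩ remw w ⁻¹' B) ∩ Set.Ico (0:ℝ) 1 = ∅ := by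
      have hsub : (digitw w ⁻¹' {k} ∩ remw w ⁻¹' B) ∩ Set.Ico (0:ℝ) 1
          ⊆ Set.Ico (cdfw w k) (cdfw w (k+1)) := by
        intro x hx
        have : x ∈ digitw w ⁻¹' {k} ∩ Set.Ico (0:ℝ) 1 := ⟨hx.1.1, hx.2⟩
        rw [digitw_preimage hw0 hw1 k] at this
        exact this
      have : Set.Ico (cdfw w k) (cdfw w (k+1)) = ∅ := by
        rw [cdfw_succ, ← hwk, add_zero, Set.Ico_self]
      exact Set.subset_empty_iff.1 (by rw [← this]; exact hsub)
    rw [this, ← hwk]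
    simp
  · -- w k > 0
    set c := cdfw w k with hc
    have hck1 : cdfw w (k+1) = c + w k := cdfw_succ k
    set φ : ℝ → ℝ := fun x => (x - c) / w k with hφ
    have hset : (digitw w ⁻¹' {k} ∩ remw w ⁻¹' B) ∩ Set.Ico (0:ℝ) 1
        = φ ⁻¹' (B ∩ Set.Ico (0:ℝ) 1) := by
      ext x
      simp only [Set.mem_inter_iff, Set.mem_preimage, Set.mem_singleton_iff]
      constructor
      · rintro ⟨⟨hdig, hrem⟩, hx⟩
        have hIco : x ∈ Set.Ico c (c + w k) := by
          have : x ∈ digitw w ⁻¹' {k} ∩ Set.Ico (0:ℝ) 1 := ⟨hdig, hx⟩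
          rw [digitw_preimage hw0 hw1 k] at this
          rwa [hck1] at this
        have hφmem : φ x ∈ Set.Ico (0:ℝ) 1 := by
          constructor
          · exact div_nonneg (by linarith [hIco.1]) hwk.le
          · rw [div_lt_one hwk]; linarith [hIco.2]
        have : remw w x = φ x := by rw [remw, hdig]
        exact ⟨this ▸ hrem, hφmem⟩
      · rintro ⟨hφB, hφ0, hφ1⟩
        have hx1 : c ≤ x := by
          have := (div_nonneg_iff.mp hφ0)
          rcases this with ⟨h, _⟩ | ⟨_, h⟩
          · linarith
          · linarith
        have hx2 : x < c + w k := by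
          rw [div_lt_one hwk] at hφ1; linarith
        have hxmem : x ∈ Set.Ico (cdfw w k) (cdfw w (k+1)) := by
          rw [hck1]; exact ⟨hx1, hx2⟩
        rw [← digitw_preimage hw0 hw1 k] at hxmem
        have hdig : digitw w x = k := hxmem.1
        have : remw w x = φ x := by rw [remw, hdig]
        exact ⟨⟨hdig, this ▸ hφB⟩, hxmem.2⟩
    rw [hset]
    -- φ⁻¹ S = (x ↦ x + (−c))⁻¹ ((y ↦ (w k)⁻¹ * y)⁻¹ S)   with φ x = (w k)⁻¹ * (x − c)
    have hφcomp : φ = (fun y => (w k)⁻¹ * y) ∘ (fun x => -c + x) := by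
      funext x; simp [hφ, div_eq_inv_mul, neg_add_eq_sub]
    rw [hφcomp, Set.preimage_comp]
    rw [measure_preimage_add]
    rw [Real.volume_preimage_mul_left (inv_ne_zero hwk.ne')]
    rw [inv_inv, abs_of_pos hwk]
  done

lemma meas_digit_preimage (hw0 : ∀ k, 0 ≤ w k) (hw1 : HasSum w 1) (A : Set ℕ) :
    mIco (digitw w ⁻¹' A) = ∑' k : A, ENNReal.ofReal (w k) := by
  have hd := measurable_digitw hw0 hw1
  have : digitw w ⁻¹' A = ⋃ k : A, digitw w ⁻¹' {(k : ℕ)} := by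
    ext x; simp
  rw [this, measure_iUnion]
  · congr 1
    funext k
    have := meas_digit_rem hw0 hw1 (k : ℕ) (B := Set.univ) MeasurableSet.univ
    simpa using this
  · intro i j hij
    simp only [Function.onFun]
    apply Set.disjoint_left.2
    intro x hx1 hx2
    simp only [Set.mem_preimage, Set.mem_singleton_iff] at hx1 hx2
    exact hij (Subtype.ext (hx1 ▸ hx2))
  · intro k; exact hd (measurableSet_singleton _)

lemma map_remw (hw0 : ∀ k, 0 ≤ w k) (hw1 : HasSum w 1) :
    Measure.map (remw w) mIco = mIco := by
  have hrm := measurable_remw hw0 hw1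
  have hd := measurable_digitw hw0 hw1
  ext B hB
  rw [Measure.map_apply hrm hB]
  have hcover : remw w ⁻¹' B = ⋃ k : ℕ, (digitw w ⁻¹' {k} ∩ remw w ⁻¹' B) := by
    ext x
    simp only [Set.mem_iUnion, Set.mem_inter_iff, Set.mem_preimage, Set.mem_singleton_iff]
    exact ⟨fun h => ⟨digitw w x, rfl, h⟩, fun ⟨k, _, h⟩ => h⟩
  rw [hcover, measure_iUnion]
  · have : ∀ k : ℕ, mIco (digitw w ⁻¹' {k} ∩ remw w ⁻¹' B)
        = ENNReal.ofReal (w k) * mIco B := fun k => meas_digit_rem hw0 hw1 k hB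
    rw [tsum_congr this, ENNReal.tsum_mul_right]
    have : ∑' k : ℕ, ENNReal.ofReal (w k) = 1 := by
      rw [← ENNReal.ofReal_tsum_of_nonneg hw0 hw1.summable, hw1.tsum_eq]
      simp
    rw [this, one_mul]
  · intro i j hij
    simp only [Function.onFun]
    apply Set.disjoint_left.2
    intro x hx1 hx2
    exact hij (hx1.1.symm ▸ hx2.1 ▸ rfl : i = j)
  · intro k; exact (hd (measurableSet_singleton _)).inter (hrm hB)

lemma map_remw_restrict (hw0 : ∀ k, 0 ≤ w k) (hw1 : HasSum w 1) (k : ℕ) :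
    Measure.map (remw w) (mIco.restrict (digitw w ⁻¹' {k}))
      = ENNReal.ofReal (w k) • mIco := by
  have hrm := measurable_remw hw0 hw1
  have hd := measurable_digitw hw0 hw1
  ext B hB
  rw [Measure.map_apply hrm hB, Measure.restrict_apply (hrm hB), Measure.smul_apply,
    Set.inter_comm, meas_digit_rem hw0 hw1 k hB, smul_eq_mul]

lemma integral_digit_rem (hw0 : ∀ k, 0 ≤ w k) (hw1 : HasSum w 1)
    (g : ℕ → ℂ) (h : ℝ → ℂ) (hg : ∀ k, ‖g k‖ ≤ 1) (hh : Measurable h)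
    (hhb : ∀ y, ‖h y‖ ≤ 1) :
    ∫ x, g (digitw w x) * h (remw w x) ∂mIco
      = (∑' k, (w k : ℂ) * g k) * ∫ y, h y ∂mIco := by
  have hd := measurable_digitw hw0 hw1
  have hrm := measurable_remw hw0 hw1
  set F : ℝ → ℂ := fun x => g (digitw w x) * h (remw w x) with hF
  have hFmeas : Measurable F :=
    ((measurable_from_top (f := g)).comp hd).mul (hh.comp hrm)
  have hFbdd : ∀ x, ‖F x‖ ≤ 1 := by
    intro x
    rw [hF]
    calc ‖g (digitw w x) * h (remw w x)‖ = ‖g (digitw w x)‖ * ‖h (remw w x)‖ := norm_mul _ _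
    _ ≤ 1 * 1 := mul_le_mul (hg _) (hhb _) (norm_nonneg _) zero_le_one
    _ = 1 := one_mul 1
  have hFint : Integrable F mIco := by
    refine Integrable.mono' (integrable_const 1) hFmeas.aestronglyMeasurable ?_
    exact Filter.Eventually.of_forall hFbdd
  have hcover : (⋃ k : ℕ, digitw w ⁻¹' {k}) = Set.univ := by
    ext x; simp
  have hdisj : Pairwise (Function.onFun Disjoint (fun k : ℕ => digitw w ⁻¹' {k})) := by
    intro i j hij
    apply Set.disjoint_left.2
    intro x hx1 hx2
    exact hij (hx1.symm ▸ hx2 ▸ rfl : i = j)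
  have hmeasfib : ∀ k : ℕ, MeasurableSet (digitw w ⁻¹' {k}) :=
    fun k => hd (measurableSet_singleton _)
  have step1 : ∫ x, F x ∂mIco = ∑' k : ℕ, ∫ x in digitw w ⁻¹' {k}, F x ∂mIco := by
    rw [← integral_iUnion hmeasfib hdisj (by rw [hcover]; exact hFint.integrableOn)]
    rw [hcover, setIntegral_univ]
  have step2 : ∀ k : ℕ, ∫ x in digitw w ⁻¹' {k}, F x ∂mIco
      = (w k : ℂ) * g k * ∫ y, h y ∂mIco := by
    intro k
    have heq : ∀ x ∈ digitw w ⁻¹' {k}, F x = g k * h (remw w x) := by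
      intro x hx
      simp only [Set.mem_preimage, Set.mem_singleton_iff] at hx
      rw [hF]; simp only [hx]
    rw [setIntegral_congr_fun (hmeasfib k) heq, integral_const_mul]
    have : ∫ x in digitw w ⁻¹' {k}, h (remw w x) ∂mIco
        = ∫ y, h y ∂(Measure.map (remw w) (mIco.restrict (digitw w ⁻¹' {k}))) := by
      rw [integral_map hrm.aemeasurable hh.aestronglyMeasurable]
    rw [this, map_remw_restrict hw0 hw1 k, integral_smul_measure,
      ENNReal.toReal_ofReal (hw0 k)]
    rw [Complex.real_smul]
    ring
  rw [step1, tsum_congr step2, tsum_mul_right]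

lemma meas_digit_ge (hw0 : ∀ k, 0 ≤ w k) (hw1 : HasSum w 1) (t : ℕ) :
    mIco {x | t ≤ digitw w x} = ENNReal.ofReal (1 - cdfw w t) := by
  have hd := measurable_digitw hw0 hw1
  have hset : {x | t ≤ digitw w x} = digitw w ⁻¹' {k | t ≤ k} := rfl
  have hmeas : MeasurableSet (digitw w ⁻¹' {k | t ≤ k}) := hd (by trivial)
  rw [hset, mIco_apply hmeas]
  have : digitw w ⁻¹' {k | t ≤ k} ∩ Set.Ico (0:ℝ) 1 = Set.Ico (cdfw w t) 1 := by
    ext x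
    simp only [Set.mem_inter_iff, Set.mem_preimage, Set.mem_setOf_eq, Set.mem_Ico]
    constructor
    · rintro ⟨ht, hx0, hx1⟩
      refine ⟨?_, hx1⟩
      calc cdfw w t ≤ cdfw w (digitw w x) := cdfw_mono hw0 ht
      _ ≤ x := (digitw_spec hw0 hw1 hx0 hx1).1
    · rintro ⟨h1, h2⟩
      have hx0 : 0 ≤ x := le_trans (cdfw_nonneg hw0 t) h1
      refine ⟨?_, hx0, h2⟩
      by_contra hlt
      push_neg at hlt
      have : cdfw w (digitw w x + 1) ≤ cdfw w t := cdfw_mono hw0 hlt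
      have := (digitw_spec hw0 hw1 hx0 h2).2
      linarith
  rw [this, Real.volume_Ico]


/-! ### The cascade -/

noncomputable def casR (W : ℕ → ℕ → ℝ) : ℕ → ℝ → ℝ
  | 0 => id
  | n+1 => fun x => casR (fun i => W (i+1)) n (remw (W 0) x)

noncomputable def casD (W : ℕ → ℕ → ℝ) (n : ℕ) (x : ℝ) : ℕ := digitw (W n) (casR W n x)

noncomputable def casT (W V : ℕ → ℕ → ℝ) : ℕ → ℝ → ℝ
  | 0 => fun _ => 0
  | n+1 => fun x => V 0 (digitw (W 0) x)
      + casT (fun i => W (i+1)) (fun i => V (i+1)) n (remw (W 0) x)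

section cascade

variable {W V : ℕ → ℕ → ℝ}

def pmfOK (W : ℕ → ℕ → ℝ) : Prop := ∀ i, (∀ k, 0 ≤ W i k) ∧ HasSum (W i) 1

lemma pmfOK.shift (hW : pmfOK W) : pmfOK (fun i => W (i+1)) := fun i => hW (i+1)

lemma casD_zero (x : ℝ) : casD W 0 x = digitw (W 0) x := rfl

lemma casD_succ (n : ℕ) (x : ℝ) :
    casD W (n+1) x = casD (fun i => W (i+1)) n (remw (W 0) x) := rfl

lemma measurable_casR (hW : pmfOK W) (n : ℕ) : Measurable (casR W n) := by
  induction n generalizing W with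
  | zero => exact measurable_id
  | succ n ih =>
    exact (ih hW.shift).comp (measurable_remw (hW 0).1 (hW 0).2)

lemma measurable_casD (hW : pmfOK W) (n : ℕ) : Measurable (casD W n) :=
  (measurable_digitw (hW n).1 (hW n).2).comp (measurable_casR hW n)

lemma measurable_casT (hW : pmfOK W) (n : ℕ) : Measurable (casT W V n) := by
  induction n generalizing W V with
  | zero => exact measurable_const
  | succ n ih =>
    exact ((measurable_from_top (f := V 0)).comp
        (measurable_digitw (hW 0).1 (hW 0).2)).add
      ((ih hW.shift).comp (measurable_remw (hW 0).1 (hW 0).2))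

lemma map_casR (hW : pmfOK W) (n : ℕ) : Measure.map (casR W n) mIco = mIco := by
  induction n generalizing W with
  | zero => simp [casR]
  | succ n ih =>
    have : casR W (n+1) = (casR (fun i => W (i+1)) n) ∘ (remw (W 0)) := rfl
    rw [this, ← Measure.map_map (measurable_casR hW.shift n)
      (measurable_remw (hW 0).1 (hW 0).2)]
    rw [map_remw (hW 0).1 (hW 0).2, ih hW.shift]

lemma meas_casD_ge (hW : pmfOK W) (n t : ℕ) :
    mIco {x | t ≤ casD W n x} = ENNReal.ofReal (1 - cdfw (W n) t) := by
  have : {x | t ≤ casD W n x} = casR W n ⁻¹' {y | t ≤ digitw (W n) y} := rfl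
  have hpre : casR W n ⁻¹' {y | t ≤ digitw (W n) y}
      = casR W n ⁻¹' (digitw (W n) ⁻¹' {k | t ≤ k}) := rfl
  rw [this, hpre, ← Measure.map_apply (measurable_casR hW n)
    ((measurable_digitw (hW n).1 (hW n).2) (by trivial : MeasurableSet {k | t ≤ k}))]
  rw [map_casR hW n]
  exact meas_digit_ge (hW n).1 (hW n).2 t

lemma meas_casD_eq_one_le (hW : pmfOK W) (n : ℕ) :
    mIco {x | casD W n x = 1} ≤ ENNReal.ofReal (1 - cdfw (W n) 1) := by
  rw [← meas_casD_ge hW n 1]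
  apply measure_mono
  intro x hx
  simp only [Set.mem_setOf_eq] at hx ⊢
  omega

lemma casT_eq (n : ℕ) (x : ℝ) :
    casT W V n x = ∑ i ∈ Finset.range n, V i (casD W i x) := by
  induction n generalizing W V x with
  | zero => simp [casT]
  | succ n ih =>
    show V 0 (digitw (W 0) x)
        + casT (fun i => W (i+1)) (fun i => V (i+1)) n (remw (W 0) x)
      = ∑ i ∈ Finset.range (n+1), V i (casD W i x)
    rw [ih, Finset.sum_range_succ']
    simp only [casD_succ, casD_zero]
    ring

lemma integral_exp_casT (hW : pmfOK W) (θ : ℝ) (n : ℕ) :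
    ∫ x, Complex.exp (θ * casT W V n x * Complex.I) ∂mIco
      = ∏ i ∈ Finset.range n, ∑' k, (W i k : ℂ)
          * Complex.exp (θ * V i k * Complex.I) := by
  induction n generalizing W V with
  | zero =>
    simp only [casT, Finset.range_zero, Finset.prod_empty]
    have : ∀ x : ℝ, Complex.exp (θ * ((0:ℝ) : ℂ) * Complex.I) = 1 := by
      intro x; simp
    simp only [Complex.ofReal_zero, mul_zero, zero_mul, Complex.exp_zero]
    simp [measure_univ]
  | succ n ih =>
    have hexp : ∀ x : ℝ, Complex.exp (θ * casT W V (n+1) x * Complex.I)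
        = Complex.exp (θ * V 0 (digitw (W 0) x) * Complex.I)
          * Complex.exp (θ * casT (fun i => W (i+1)) (fun i => V (i+1)) n
              (remw (W 0) x) * Complex.I) := by
      intro x
      rw [← Complex.exp_add]
      congr 1
      rw [casT]
      push_cast
      ring
    rw [integral_congr_ae (Filter.Eventually.of_forall hexp)]
    have hmain := integral_digit_rem (hW 0).1 (hW 0).2
      (g := fun k => Complex.exp (θ * V 0 k * Complex.I))
      (h := fun y => Complex.exp (θ * casT (fun i => W (i+1)) (fun i => V (i+1)) n y
        * Complex.I))
      (fun k => by
        rw [Complex.norm_exp]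
        simp)
      (by
        apply Complex.measurable_exp.comp
        apply Measurable.mul_const
        exact (Complex.measurable_ofReal.comp
          (measurable_casT hW.shift n)).const_mul _)
      (fun y => by
        rw [Complex.norm_exp]
        simp)
    rw [hmain, ih hW.shift, Finset.prod_range_succ']
    ring

end cascade

/-! ### Prime-specific weights -/

noncomputable def Wp (r : ℝ) (p : Nat.Primes) : ℕ → ℝ
  | 0 => 1 - 1/(((p:ℕ):ℝ) - 1 + r)
  | (ν+1) => (1 - 1/((p:ℕ):ℝ)) / (((p:ℕ):ℝ)^ν * (((p:ℕ):ℝ) - 1 + r))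

noncomputable def Vp (f : ℕ → ℝ) (p : Nat.Primes) : ℕ → ℝ
  | 0 => 0
  | (ν+1) => f ((p:ℕ)^(ν+1))

section primes

variable {f : ℕ → ℝ} {r θ : ℝ} {p : Nat.Primes}

lemma two_le_P (p : Nat.Primes) : (2:ℝ) ≤ ((p:ℕ):ℝ) := by
  exact_mod_cast p.2.two_le

lemma P_pos (p : Nat.Primes) : (0:ℝ) < ((p:ℕ):ℝ) := lt_of_lt_of_le two_pos (two_le_P p)

lemma denom_ge_one (hr : 0 ≤ r) (p : Nat.Primes) : (1:ℝ) ≤ ((p:ℕ):ℝ) - 1 + r := by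
  have := two_le_P p; linarith

lemma denom_pos (hr : 0 ≤ r) (p : Nat.Primes) : (0:ℝ) < ((p:ℕ):ℝ) - 1 + r :=
  lt_of_lt_of_le one_pos (denom_ge_one hr p)

lemma Wp_nonneg (hr : 0 ≤ r) (p : Nat.Primes) (k : ℕ) : 0 ≤ Wp r p k := by
  have h2 := two_le_P p
  have hd := denom_ge_one hr p
  have hd' := denom_pos hr p
  cases k with
  | zero =>
    have : 1/(((p:ℕ):ℝ) - 1 + r) ≤ 1 := by
      rw [div_le_one hd']; linarith
    simp only [Wp]; linarith
  | succ ν =>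
    apply div_nonneg
    · have : 1/((p:ℕ):ℝ) ≤ 1 := by
        rw [div_le_one (P_pos p)]; linarith
      linarith
    · positivity

lemma hasSum_Wp_tail (hr : 0 ≤ r) (p : Nat.Primes) :
    HasSum (fun ν => Wp r p (ν+1)) (1/(((p:ℕ):ℝ) - 1 + r)) := by
  set P := ((p:ℕ):ℝ) with hP
  have hPpos := P_pos p
  have h2 := two_le_P p
  have hd' := denom_pos hr p
  have hgeo : HasSum (fun ν : ℕ => (1/P)^ν) (1 - 1/P)⁻¹ :=
    hasSum_geometric_of_lt_one (by positivity) (by rw [div_lt_one hPpos]; linarith)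
  have := hgeo.mul_left ((1 - 1/P)/(P - 1 + r))
  have heq : ∀ ν : ℕ, ((1 - 1/P)/(P - 1 + r)) * (1/P)^ν = Wp r p (ν+1) := by
    intro ν
    simp only [Wp, div_pow, one_pow]
    rw [div_mul_div_comm]
    congr 1
    · ring
    · ring
  have hval : ((1 - 1/P)/(P - 1 + r)) * (1 - 1/P)⁻¹ = 1/(P - 1 + r) := by
    have h1P : 1 - 1/P ≠ 0 := by
      have : 1/P ≤ 1/2 := by
        rw [div_le_div_iff₀ hPpos two_pos]; linarith
      intro h; rw [sub_eq_zero] at h; rw [← h] at this; linarith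
    rw [div_mul_eq_mul_div, mul_inv_cancel₀ h1P]
  rw [← hval]
  exact (funext heq) ▸ this
lemma hasSum_Wp (hr : 0 ≤ r) (p : Nat.Primes) : HasSum (Wp r p) 1 := by
  have h := (hasSum_nat_add_iff (f := Wp r p) (g := 1/(((p:ℕ):ℝ) - 1 + r)) 1).1
    (hasSum_Wp_tail hr p)
  have heq : 1/(((p:ℕ):ℝ) - 1 + r) + ∑ i ∈ Finset.range 1, Wp r p i = 1 := by
    simp only [Finset.range_one, Finset.sum_singleton]
    show 1/(((p:ℕ):ℝ) - 1 + r) + Wp r p 0 = 1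
    simp only [Wp]; ring
  rwa [heq] at h

lemma pmfOK_Wp (hr : 0 ≤ r) (e : ℕ ≃ Nat.Primes) : pmfOK (fun n => Wp r (e n)) :=
  fun n => ⟨Wp_nonneg hr (e n), hasSum_Wp hr (e n)⟩

lemma one_div_P_ne (p : Nat.Primes) : 1 - 1/((p:ℕ):ℝ) ≠ 0 := by
  have hPpos := P_pos p
  have h2 := two_le_P p
  have : 1/((p:ℕ):ℝ) ≤ 1/2 := by
    rw [div_le_div_iff₀ hPpos two_pos]; linarith
  intro h; rw [sub_eq_zero] at h; rw [← h] at this; linarith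

lemma hasSum_Wp_tail2 (hr : 0 ≤ r) (p : Nat.Primes) :
    HasSum (fun ν => Wp r p (ν+2))
      ((1/((p:ℕ):ℝ)) * (1/(((p:ℕ):ℝ) - 1 + r))) := by
  set P := ((p:ℕ):ℝ) with hP
  have hPpos := P_pos p
  have h2 := two_le_P p
  have hd' := denom_pos hr p
  have hgeo : HasSum (fun ν : ℕ => (1/P)^ν) (1 - 1/P)⁻¹ :=
    hasSum_geometric_of_lt_one (by positivity) (by rw [div_lt_one hPpos]; linarith)
  have hmul := hgeo.mul_left ((1 - 1/P)/(P * (P - 1 + r)))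
  have heq : ∀ ν : ℕ, ((1 - 1/P)/(P * (P - 1 + r))) * (1/P)^ν = Wp r p (ν+2) := by
    intro ν
    show _ = (1 - 1/P) / (P^(ν+1) * (P - 1 + r))
    rw [div_pow, one_pow, div_mul_div_comm, mul_one]
    congr 1
    rw [pow_succ]
    ring
  have hval : ((1 - 1/P)/(P * (P - 1 + r))) * (1 - 1/P)⁻¹
      = (1/P) * (1/(P - 1 + r)) := by
    rw [div_mul_eq_mul_div, mul_inv_cancel₀ (one_div_P_ne p), div_mul_div_comm, one_mul]
  rw [← hval]
  exact (funext heq) ▸ hmul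

lemma one_sub_cdfw_Wp_one (hr : 0 ≤ r) (p : Nat.Primes) :
    1 - cdfw (Wp r p) 1 = 1/(((p:ℕ):ℝ) - 1 + r) := by
  have : cdfw (Wp r p) 1 = Wp r p 0 := by simp [cdfw]
  rw [this]
  simp only [Wp]
  ring

lemma one_sub_cdfw_Wp_two (hr : 0 ≤ r) (p : Nat.Primes) :
    1 - cdfw (Wp r p) 2 = (1/((p:ℕ):ℝ)) * (1/(((p:ℕ):ℝ) - 1 + r)) := by
  have h := (hasSum_nat_add_iff (f := Wp r p)
    (g := (1/((p:ℕ):ℝ)) * (1/(((p:ℕ):ℝ) - 1 + r))) 2).1 (hasSum_Wp_tail2 hr p)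
  have := (hasSum_Wp hr p).unique h
  have hcdf : cdfw (Wp r p) 2 = ∑ i ∈ Finset.range 2, Wp r p i := rfl
  rw [hcdf]
  linarith

lemma cdfw_Wp_one_bound (hr : 0 ≤ r) (p : Nat.Primes) :
    1 - cdfw (Wp r p) 1 ≤ 2/((p:ℕ):ℝ) := by
  rw [one_sub_cdfw_Wp_one hr p]
  have hPpos := P_pos p
  have h2 := two_le_P p
  have hd' := denom_pos hr p
  rw [div_le_div_iff₀ hd' hPpos]
  nlinarith

lemma cdfw_Wp_two_bound (hr : 0 ≤ r) (p : Nat.Primes) :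
    1 - cdfw (Wp r p) 2 ≤ 2/((p:ℕ):ℝ)^2 := by
  rw [one_sub_cdfw_Wp_two hr p]
  have hPpos := P_pos p
  have h2 := two_le_P p
  have hd' := denom_pos hr p
  rw [div_mul_div_comm, one_mul, div_le_div_iff₀ (by positivity) (by positivity)]
  nlinarith

lemma normExpI_le_two (t : ℝ) : ‖Complex.exp ((t:ℂ) * Complex.I) - 1‖ ≤ 2 := by
  calc ‖Complex.exp ((t:ℂ) * Complex.I) - 1‖
      ≤ ‖Complex.exp ((t:ℂ) * Complex.I)‖ + ‖(1:ℂ)‖ := norm_sub_le _ _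
  _ ≤ 2 := by
      rw [Complex.norm_exp]
      norm_num

lemma normExpI_le (t : ℝ) : ‖Complex.exp ((t:ℂ) * Complex.I) - 1‖ ≤ 2 * |t| := by
  rcases le_or_gt (|t|) 1 with h | h
  · have habs : ‖(t:ℂ) * Complex.I‖ ≤ 1 := by
      rw [norm_mul, Complex.norm_I, mul_one, Complex.norm_real, Real.norm_eq_abs]; exact h
    have := Complex.norm_exp_sub_one_le habs
    rw [norm_mul, Complex.norm_I, mul_one, Complex.norm_real, Real.norm_eq_abs] at this
    exact this
  · calc ‖Complex.exp ((t:ℂ) * Complex.I) - 1‖ ≤ 2 := normExpI_le_two t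
    _ ≤ 2 * |t| := by nlinarith

/-- The weighted-exponential form of the local factor. -/
lemma localFactor_eq_one_add (hr : 0 ≤ r) (p : Nat.Primes) (f : ℕ → ℝ) (θ : ℝ) :
    localFactor f r θ p = 1 + ∑' ν : ℕ, (Wp r p (ν+1) : ℂ)
      * (Complex.exp (θ * f ((p:ℕ)^(ν+1)) * Complex.I) - 1) := by
  rw [localFactor, ← tsum_mul_left]
  congr 1
  apply tsum_congr
  intro ν
  have hcast : (Wp r p (ν+1) : ℂ)
      = ((1:ℂ) - 1/((p:ℕ):ℂ)) / (((p:ℕ):ℂ)^ν * (((p:ℕ):ℂ) - 1 + (r:ℂ))) := by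
    show ((((1 - 1/((p:ℕ):ℝ)) / (((p:ℕ):ℝ)^ν * (((p:ℕ):ℝ) - 1 + r))) : ℝ) : ℂ) = _
    push_cast
    ring
  rw [hcast]
  ring

lemma summable_WpE (hr : 0 ≤ r) (p : Nat.Primes) (g : ℕ → ℂ) (hg : ∀ ν, ‖g ν‖ ≤ 2) :
    Summable (fun ν => (Wp r p (ν+1) : ℂ) * g ν) := by
  apply Summable.of_norm_bounded (g := fun ν => Wp r p (ν+1) * 2)
  · exact (hasSum_Wp_tail hr p).summable.mul_right 2
  · intro ν
    rw [norm_mul, Complex.norm_real, Real.norm_eq_abs, _root_.abs_of_nonneg (Wp_nonneg hr p (ν+1))]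
    exact mul_le_mul_of_nonneg_left (hg ν) (Wp_nonneg hr p (ν+1))

/-- The local factor is the characteristic function of the discrete local law. -/
lemma localFactor_eq (hr : 0 ≤ r) (p : Nat.Primes) (f : ℕ → ℝ) (θ : ℝ) :
    localFactor f r θ p
      = ∑' k : ℕ, (Wp r p k : ℂ) * Complex.exp (θ * Vp f p k * Complex.I) := by
  set E : ℕ → ℂ := fun ν => Complex.exp (θ * f ((p:ℕ)^(ν+1)) * Complex.I) with hE
  have hEnorm : ∀ ν, ‖E ν‖ = 1 := by
    intro ν
    rw [hE, Complex.norm_exp]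
    simp
  have hsub : ∀ ν, ‖E ν - 1‖ ≤ 2 := by
    intro ν
    calc ‖E ν - 1‖ ≤ ‖E ν‖ + ‖(1:ℂ)‖ := norm_sub_le _ _
    _ ≤ 2 := by rw [hEnorm ν]; norm_num
  have hsumRHS : Summable (fun k : ℕ => (Wp r p k : ℂ)
      * Complex.exp (θ * Vp f p k * Complex.I)) := by
    apply Summable.of_norm_bounded (g := Wp r p) (hasSum_Wp hr p).summable
    intro k
    rw [norm_mul, Complex.norm_real, Real.norm_eq_abs, _root_.abs_of_nonneg (Wp_nonneg hr p k),
      Complex.norm_exp]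
    simp
  rw [Summable.tsum_eq_zero_add hsumRHS]
  have hzero : (Wp r p 0 : ℂ) * Complex.exp (θ * Vp f p 0 * Complex.I) = Wp r p 0 := by
    show (Wp r p 0 : ℂ) * Complex.exp (θ * ((0:ℝ):ℂ) * Complex.I) = _
    simp
  rw [hzero]
  have hVp : ∀ ν : ℕ, (Vp f p (ν+1) : ℂ) = (f ((p:ℕ)^(ν+1)) : ℂ) := fun ν => rfl
  have hRHS : ∀ ν : ℕ, (Wp r p (ν+1) : ℂ) * Complex.exp (θ * Vp f p (ν+1) * Complex.I)
      = (Wp r p (ν+1) : ℂ) * E ν := by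
    intro ν; rw [hVp]
  rw [tsum_congr hRHS]
  rw [localFactor_eq_one_add hr p f θ]
  have hsE : Summable (fun ν => (Wp r p (ν+1) : ℂ) * E ν) :=
    summable_WpE hr p E (fun ν => by rw [hEnorm]; norm_num)
  have hsC : Summable (fun ν => ((Wp r p (ν+1) : ℝ) : ℂ)) := by
    rw [Complex.summable_ofReal]
    exact (hasSum_Wp_tail hr p).summable
  have hsplit : (fun ν => (Wp r p (ν+1) : ℂ) * (E ν - 1))
      = fun ν => (Wp r p (ν+1) : ℂ) * E ν - (Wp r p (ν+1) : ℂ) := by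
    funext ν; ring
  rw [hsplit, Summable.tsum_sub hsE hsC]
  have htsumC : ∑' ν, ((Wp r p (ν+1) : ℝ) : ℂ) = ((1/(((p:ℕ):ℝ) - 1 + r) : ℝ) : ℂ) := by
    rw [← Complex.ofReal_tsum]
    exact congrArg Complex.ofReal (hasSum_Wp_tail hr p).tsum_eq
  rw [htsumC]
  have hW0 : (Wp r p 0 : ℂ) = 1 - ((1/(((p:ℕ):ℝ) - 1 + r) : ℝ) : ℂ) := by
    show ((1 - 1/(((p:ℕ):ℝ) - 1 + r) : ℝ) : ℂ) = _
    push_cast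
    ring
  rw [hW0]
  ring

/-- The summable majorant for `‖localFactor − 1‖`. -/
noncomputable def Bnd (f : ℕ → ℝ) (θ : ℝ) (p : Nat.Primes) : ℝ :=
  (if |f (p:ℕ)| ≤ 1 then 4 * |θ| * |f (p:ℕ)| / ((p:ℕ):ℝ) else 0)
    + (if 1 < |f (p:ℕ)| then 4/((p:ℕ):ℝ) else 0) + 4/((p:ℕ):ℝ)^2

lemma Bnd_nonneg (f : ℕ → ℝ) (θ : ℝ) (p : Nat.Primes) : 0 ≤ Bnd f θ p := by
  have := P_pos p
  unfold Bnd
  split_ifs <;> positivity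

lemma norm_localFactor_sub_one_le (hr : 0 ≤ r) (p : Nat.Primes) (f : ℕ → ℝ) (θ : ℝ) :
    ‖localFactor f r θ p - 1‖ ≤ Bnd f θ p := by
  set P := ((p:ℕ):ℝ) with hP
  have hPpos := P_pos p
  have h2 := two_le_P p
  have hd' := denom_pos hr p
  set E : ℕ → ℂ := fun ν => Complex.exp (θ * f ((p:ℕ)^(ν+1)) * Complex.I) with hE
  have hsub : ∀ ν, ‖E ν - 1‖ ≤ 2 := by
    intro ν
    have : (θ:ℂ) * (f ((p:ℕ)^(ν+1)):ℂ) * Complex.I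
        = ((θ * f ((p:ℕ)^(ν+1)) : ℝ) : ℂ) * Complex.I := by push_cast; ring
    rw [hE]; simp only [this]
    exact normExpI_le_two _
  have hsum_norm : Summable (fun ν => Wp r p (ν+1) * ‖E ν - 1‖) := by
    apply Summable.of_nonneg_of_le
      (fun ν => mul_nonneg (Wp_nonneg hr p (ν+1)) (norm_nonneg _))
      (fun ν => mul_le_mul_of_nonneg_left (hsub ν) (Wp_nonneg hr p (ν+1)))
    exact (hasSum_Wp_tail hr p).summable.mul_right 2
  have key : ‖localFactor f r θ p - 1‖ ≤ ∑' ν, Wp r p (ν+1) * ‖E ν - 1‖ := by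
    rw [localFactor_eq_one_add hr p f θ, add_sub_cancel_left]
    refine le_trans (norm_tsum_le_tsum_norm ?_) ?_
    · apply Summable.of_nonneg_of_le (fun ν => norm_nonneg _) ?_ hsum_norm
      intro ν
      rw [norm_mul, Complex.norm_real, Real.norm_eq_abs,
        _root_.abs_of_nonneg (Wp_nonneg hr p (ν+1))]
    · apply le_of_eq
      apply tsum_congr
      intro ν
      rw [norm_mul, Complex.norm_real, Real.norm_eq_abs,
        _root_.abs_of_nonneg (Wp_nonneg hr p (ν+1))]
  -- split off the ν = 0 term
  have hsplit : ∑' ν, Wp r p (ν+1) * ‖E ν - 1‖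
      = Wp r p 1 * ‖E 0 - 1‖ + ∑' ν, Wp r p (ν+2) * ‖E (ν+1) - 1‖ := by
    rw [Summable.tsum_eq_zero_add hsum_norm]
  have htail : ∑' ν, Wp r p (ν+2) * ‖E (ν+1) - 1‖ ≤ 2 * ((1/P) * (1/(P - 1 + r))) := by
    have hs2 : Summable (fun ν => Wp r p (ν+2) * ‖E (ν+1) - 1‖) := by
      apply Summable.of_nonneg_of_le
        (fun ν => mul_nonneg (Wp_nonneg hr p (ν+2)) (norm_nonneg _))
        (fun ν => mul_le_mul_of_nonneg_left (hsub (ν+1)) (Wp_nonneg hr p (ν+2)))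
      exact (hasSum_Wp_tail2 hr p).summable.mul_right 2
    calc ∑' ν, Wp r p (ν+2) * ‖E (ν+1) - 1‖
        ≤ ∑' ν, Wp r p (ν+2) * 2 := by
          apply Summable.tsum_le_tsum ?_ hs2 ((hasSum_Wp_tail2 hr p).summable.mul_right 2)
          exact fun ν => mul_le_mul_of_nonneg_left (hsub (ν+1)) (Wp_nonneg hr p (ν+2))
    _ = 2 * ((1/P) * (1/(P - 1 + r))) := by
          rw [tsum_mul_right, (hasSum_Wp_tail2 hr p).tsum_eq]; ring
  have hW1 : Wp r p 1 ≤ 2/P := by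
    show (1 - 1/P) / (P^0 * (P - 1 + r)) ≤ 2/P
    rw [pow_zero, one_mul, div_le_div_iff₀ hd' hPpos]
    have h1P : 0 < 1/P := by positivity
    nlinarith
  have htail2 : 2 * ((1/P) * (1/(P - 1 + r))) ≤ 4/P^2 := by
    rw [div_mul_div_comm, one_mul, mul_div_assoc']
    rw [div_le_div_iff₀ (by positivity) (by positivity)]
    nlinarith
  have hE0 : ‖E 0 - 1‖ ≤ min 2 (2 * |θ| * |f (p:ℕ)|) := by
    have hcast : (θ:ℂ) * (f ((p:ℕ)^(0+1)):ℂ) * Complex.I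
        = ((θ * f ((p:ℕ)) : ℝ) : ℂ) * Complex.I := by
      rw [pow_one]; push_cast; ring
    rw [hE]
    simp only [hcast]
    refine le_min (normExpI_le_two _) ?_
    have := normExpI_le (θ * f (p:ℕ))
    rw [abs_mul] at this
    calc ‖Complex.exp (((θ * f (p:ℕ) : ℝ):ℂ) * Complex.I) - 1‖
        ≤ 2 * (|θ| * |f (p:ℕ)|) := this
    _ = 2 * |θ| * |f (p:ℕ)| := by ring
  have hWnn := Wp_nonneg hr p 1
  rcases le_or_gt (|f (p:ℕ)|) 1 with hf1 | hf1
  · have : Wp r p 1 * ‖E 0 - 1‖ ≤ (2/P) * (2 * |θ| * |f (p:ℕ)|) := by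
      apply mul_le_mul hW1 (le_trans hE0 (min_le_right _ _)) (norm_nonneg _)
      positivity
    rw [Bnd]
    simp only [hf1, if_true, not_lt.2 hf1, if_neg (not_lt.2 hf1)]
    calc ‖localFactor f r θ p - 1‖
        ≤ Wp r p 1 * ‖E 0 - 1‖ + ∑' ν, Wp r p (ν+2) * ‖E (ν+1) - 1‖ := by
          rw [← hsplit]; exact key
    _ ≤ (2/P) * (2 * |θ| * |f (p:ℕ)|) + 2 * ((1/P) * (1/(P - 1 + r))) :=
          add_le_add this htail
    _ ≤ 4 * |θ| * |f (p:ℕ)| / P + 0 + 4/P^2 := by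
          have := htail2
          have h4 : (2/P) * (2 * |θ| * |f (p:ℕ)|) = 4 * |θ| * |f (p:ℕ)| / P := by ring
          linarith
  · have : Wp r p 1 * ‖E 0 - 1‖ ≤ (2/P) * 2 := by
      apply mul_le_mul hW1 (le_trans hE0 (min_le_left _ _)) (norm_nonneg _)
      positivity
    rw [Bnd]
    simp only [not_le.2 hf1, if_false, hf1, if_true]
    calc ‖localFactor f r θ p - 1‖
        ≤ Wp r p 1 * ‖E 0 - 1‖ + ∑' ν, Wp r p (ν+2) * ‖E (ν+1) - 1‖ := by
          rw [← hsplit]; exact key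
    _ ≤ (2/P) * 2 + 2 * ((1/P) * (1/(P - 1 + r))) := add_le_add this htail
    _ ≤ 0 + 4/P + 4/P^2 := by
          have := htail2
          have h4 : (2/P) * 2 = 4/P := by ring
          linarith

lemma summable_Bnd (f : ℕ → ℝ) (θ : ℝ)
    (hs1 : Summable (fun p : Nat.Primes =>
      if 1 < |f (p : ℕ)| then 1 / ((p : ℕ) : ℝ) else 0))
    (hs3 : Summable (fun p : Nat.Primes =>
      if |f (p : ℕ)| ≤ 1 then f (p : ℕ) / ((p : ℕ) : ℝ) else 0)) :
    Summable (Bnd f θ) := by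
  apply Summable.add
  apply Summable.add
  · have h1 := (hs3.abs.mul_left (4*|θ|))
    apply h1.congr
    intro p
    have hPpos := P_pos p
    split_ifs with h
    · rw [abs_div, _root_.abs_of_nonneg (le_of_lt hPpos)]
      ring
    · simp
  · have h2 := hs1.mul_left 4
    apply h2.congr
    intro p
    split_ifs with h
    · ring
    · simp
  · have h3 : Summable (fun n : ℕ => 4/(n:ℝ)^2) := by
      have := (Real.summable_one_div_nat_pow (p := 2)).2 one_lt_two
      exact (this.mul_left 4).congr (fun n => by ring)
    have := h3.comp_injective
      (Subtype.coe_injective : Function.Injective ((↑) : Nat.Primes → ℕ))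
    exact this

lemma multipliable_localFactor (hr : 0 ≤ r) (f : ℕ → ℝ) (θ : ℝ)
    (hs1 : Summable (fun p : Nat.Primes =>
      if 1 < |f (p : ℕ)| then 1 / ((p : ℕ) : ℝ) else 0))
    (hs3 : Summable (fun p : Nat.Primes =>
      if |f (p : ℕ)| ≤ 1 then f (p : ℕ) / ((p : ℕ) : ℝ) else 0)) :
    Multipliable (localFactor f r θ) := by
  by_cases hz : ∀ p, localFactor f r θ p ≠ 0
  · have hB := summable_Bnd f θ hs1 hs3
    have hev : ∀ᶠ p in Filter.cofinite, ‖localFactor f r θ p - 1‖ ≤ 1/2 := by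
      have := hB.tendsto_cofinite_zero
      have h2 := this.eventually (eventually_le_nhds (show (0:ℝ) < 1/2 by norm_num))
      filter_upwards [h2] with p hp
      exact le_trans (norm_localFactor_sub_one_le hr p f θ) hp
    have hlog : Summable (fun p => Complex.log (localFactor f r θ p)) := by
      apply Summable.of_norm_bounded_eventually (g := fun p => 2 * Bnd f θ p) (hB.mul_left 2)
      filter_upwards [hev] with p hp
      have heq : localFactor f r θ p = 1 + (localFactor f r θ p - 1) := by ring
      calc ‖Complex.log (localFactor f r θ p)‖
          = ‖Complex.log (1 + (localFactor f r θ p - 1))‖ := by rw [← heq]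
      _ ≤ (3/2) * ‖localFactor f r θ p - 1‖ :=
            Complex.norm_log_one_add_half_le_self hp
      _ ≤ 2 * Bnd f θ p := by
            have := norm_localFactor_sub_one_le hr p f θ
            have hBnn := Bnd_nonneg f θ p
            nlinarith [norm_nonneg (localFactor f r θ p - 1)]
    have hprod := hlog.hasSum.cexp
    have hfun : (Complex.exp ∘ fun p => Complex.log (localFactor f r θ p))
        = localFactor f r θ := by
      funext p
      exact Complex.exp_log (hz p)
    rw [hfun] at hprod
    exact ⟨_, hprod⟩
  · push_neg at hz
    obtain ⟨p0, hp0⟩ := hz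
    refine ⟨0, ?_⟩
    rw [HasProd]
    have hev : ∀ᶠ F in Filter.atTop, ∏ p ∈ F, localFactor f r θ p = 0 := by
      rw [Filter.eventually_atTop]
      exact ⟨{p0}, fun F hF => Finset.prod_eq_zero
        (hF (Finset.mem_singleton_self p0)) hp0⟩
    exact Filter.Tendsto.congr' (hev.mono fun F h => h.symm) tendsto_const_nhds

end primes
section main

set_option maxHeartbeats 2000000 in
theorem main (f : ℕ → ℝ)
    (hs1 : Summable (fun p : Nat.Primes =>
      if 1 < |f (p : ℕ)| then 1 / ((p : ℕ) : ℝ) else 0))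
    (hs3 : Summable (fun p : Nat.Primes =>
      if |f (p : ℕ)| ≤ 1 then f (p : ℕ) / ((p : ℕ) : ℝ) else 0))
    (r : ℝ) (hr : 0 ≤ r) :
    ∃ μ : Measure ℝ, IsProbabilityMeasure μ ∧
      ∀ θ : ℝ, Multipliable (localFactor f r θ) ∧
        ∏' p : Nat.Primes, localFactor f r θ p
          = ∫ t : ℝ, Complex.exp (θ * t * Complex.I) ∂μ := by
  classical
  have hcount : Countable Nat.Primes := by
    unfold Nat.Primes
    infer_instance
  obtain ⟨d⟩ : Nonempty (Denumerable Nat.Primes) :=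
    nonempty_denumerable_iff.2 ⟨hcount, inferInstance⟩
  obtain ⟨e⟩ : Nonempty (ℕ ≃ Nat.Primes) := ⟨(@Denumerable.eqv Nat.Primes d).symm⟩
  set W : ℕ → ℕ → ℝ := fun n => Wp r (e n) with hWdef
  set V : ℕ → ℕ → ℝ := fun n => Vp f (e n) with hVdef
  have hW : pmfOK W := pmfOK_Wp hr e
  set X : ℕ → ℝ → ℝ := fun n x => V n (casD W n x) with hXdef
  set S : ℝ → ℝ := fun x => ∑' n, X n x with hSdef
  -- Borel–Cantelli for the bad events
  set s : ℕ → Set ℝ :=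
    fun n => {x | (if 1 < |f ((e n : ℕ))| then 1 else 2) ≤ casD W n x} with hsdef
  set g : ℕ → ℝ := fun n => (if 1 < |f ((e n : ℕ))| then 2/((e n : ℕ):ℝ) else 0)
      + 2/((e n : ℕ):ℝ)^2 with hgdef
  have hgsum : Summable g := by
    have hGg : Summable (fun p : Nat.Primes =>
        (if 1 < |f (p : ℕ)| then 2/((p : ℕ):ℝ) else 0) + 2/((p : ℕ):ℝ)^2) := by
      apply Summable.add
      · exact (hs1.mul_left 2).congr (fun p => by split_ifs <;> simp <;> ring)
      · have h3 : Summable (fun n : ℕ => 2/(n:ℝ)^2) := by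
          have := (Real.summable_one_div_nat_pow (p := 2)).2 one_lt_two
          exact (this.mul_left 2).congr (fun n => by ring)
        exact h3.comp_injective Subtype.coe_injective
    exact (Equiv.summable_iff e).2 hGg
  have hmeas_bound : ∀ n, mIco (s n) ≤ ENNReal.ofReal (g n) := by
    intro n
    have hm := meas_casD_ge hW n (if 1 < |f ((e n : ℕ))| then 1 else 2)
    have hPpos := P_pos (e n)
    rw [hsdef]
    by_cases hb : 1 < |f ((e n : ℕ))|
    · simp only [hb, if_true] at hm ⊢
      rw [hm]
      apply ENNReal.ofReal_le_ofReal
      rw [hgdef]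
      simp only [hb, if_true]
      have h1 := cdfw_Wp_one_bound hr (e n)
      have : (0:ℝ) ≤ 2/((e n : ℕ):ℝ)^2 := by positivity
      show 1 - cdfw (Wp r (e n)) 1 ≤ _
      linarith
    · simp only [hb, if_false] at hm ⊢
      rw [hm]
      apply ENNReal.ofReal_le_ofReal
      rw [hgdef]
      simp only [hb, if_false]
      have h1 := cdfw_Wp_two_bound hr (e n)
      show 1 - cdfw (Wp r (e n)) 2 ≤ _
      linarith
  have hBCsum : ∑' n, mIco (s n) ≠ ⊤ := by
    have hle : ∑' n, mIco (s n) ≤ ∑' n, ENNReal.ofReal (g n) :=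
      ENNReal.tsum_le_tsum hmeas_bound
    have : ∑' n, ENNReal.ofReal (g n) = ENNReal.ofReal (∑' n, g n) := by
      rw [ENNReal.ofReal_tsum_of_nonneg (fun n => ?_) hgsum]
      have := P_pos (e n)
      simp only [hgdef]
      split_ifs <;> positivity
    rw [this] at hle
    exact ne_top_of_le_ne_top ENNReal.ofReal_ne_top hle
  have hBC : ∀ᵐ x ∂mIco, ∀ᶠ n in Filter.atTop, x ∉ s n :=
    MeasureTheory.ae_eventually_notMem hBCsum
  -- the good (small) part is a.e. absolutely summable
  set GE : ℕ → ℝ → ENNReal := fun n => Set.indicator {x | casD W n x = 1}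
      (fun _ => ENNReal.ofReal (if |f ((e n : ℕ))| ≤ 1 then |f ((e n : ℕ))| else 0))
    with hGEdef
  have hGEmeas : ∀ n, Measurable (GE n) := by
    intro n
    apply measurable_const.indicator
    exact (measurable_casD hW n) (measurableSet_singleton 1)
  have hGEint : ∀ n, ∫⁻ x, GE n x ∂mIco
      ≤ ENNReal.ofReal ((if |f ((e n : ℕ))| ≤ 1 then |f ((e n : ℕ))| else 0)
          * (2/((e n : ℕ):ℝ))) := by
    intro n
    simp only [hGEdef]
    rw [lintegral_indicator_const (show MeasurableSet {x | casD W n x = 1} from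
      (measurable_casD hW n) (measurableSet_singleton 1))]
    have hub : mIco {x | casD W n x = 1} ≤ ENNReal.ofReal (2/((e n : ℕ):ℝ)) := by
      refine le_trans (meas_casD_eq_one_le hW n) ?_
      exact ENNReal.ofReal_le_ofReal (cdfw_Wp_one_bound hr (e n))
    calc ENNReal.ofReal (if |f ((e n : ℕ))| ≤ 1 then |f ((e n : ℕ))| else 0)
          * mIco {x | casD W n x = 1}
        ≤ ENNReal.ofReal (if |f ((e n : ℕ))| ≤ 1 then |f ((e n : ℕ))| else 0)
          * ENNReal.ofReal (2/((e n : ℕ):ℝ)) := mul_le_mul_right hub _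
    _ = ENNReal.ofReal ((if |f ((e n : ℕ))| ≤ 1 then |f ((e n : ℕ))| else 0)
          * (2/((e n : ℕ):ℝ))) := by
          rw [← ENNReal.ofReal_mul (by split_ifs <;> simp [abs_nonneg])]
  have hg2sum : Summable (fun n => (if |f ((e n : ℕ))| ≤ 1 then |f ((e n : ℕ))| else 0)
      * (2/((e n : ℕ):ℝ))) := by
    have hGg : Summable (fun p : Nat.Primes =>
        (if |f (p : ℕ)| ≤ 1 then |f (p : ℕ)| else 0) * (2/((p : ℕ):ℝ))) := by
      apply (hs3.abs.mul_left 2).congr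
      intro p
      have hPpos := P_pos p
      split_ifs
      · rw [abs_div, _root_.abs_of_nonneg (le_of_lt hPpos)]
        ring
      · simp
    exact (Equiv.summable_iff e).2 hGg
  have hGoodsum : ∑' n, ∫⁻ x, GE n x ∂mIco ≠ ⊤ := by
    have hle := ENNReal.tsum_le_tsum hGEint
    have heq : ∑' n, ENNReal.ofReal ((if |f ((e n : ℕ))| ≤ 1 then |f ((e n : ℕ))| else 0)
        * (2/((e n : ℕ):ℝ)))
        = ENNReal.ofReal (∑' n, (if |f ((e n : ℕ))| ≤ 1 then |f ((e n : ℕ))| else 0)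
            * (2/((e n : ℕ):ℝ))) := by
      rw [ENNReal.ofReal_tsum_of_nonneg (fun n => ?_) hg2sum]
      have := P_pos (e n)
      split_ifs <;> positivity
    rw [heq] at hle

    exact ne_top_of_le_ne_top ENNReal.ofReal_ne_top hle
  have hGood : ∀ᵐ x ∂mIco, ∑' n, GE n x < ⊤ := by
    have hlint : ∫⁻ x, ∑' n, GE n x ∂mIco ≠ ⊤ := by
      rw [MeasureTheory.lintegral_tsum (fun n => (hGEmeas n).aemeasurable)]
      exact hGoodsum
    exact MeasureTheory.ae_lt_top (Measurable.ennreal_tsum hGEmeas) hlint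
  -- a.e. summability of the series
  have hsummable : ∀ᵐ x ∂mIco, Summable (fun n => X n x) := by
    filter_upwards [hBC, hGood] with x hx1 hx2
    have hgre : Summable (fun n => (GE n x).toReal) := ENNReal.summable_toReal hx2.ne
    apply Summable.of_norm_bounded_eventually_nat hgre
    filter_upwards [hx1] with n hn
    rw [hsdef] at hn
    simp only [Set.mem_setOf_eq, not_le] at hn
    by_cases hb : 1 < |f ((e n : ℕ))|
    · rw [if_pos hb] at hn
      interval_cases h : casD W n x
      · have : X n x = 0 := by
          rw [hXdef]
          simp only [h]
          rfl
        rw [this]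
        simp [ENNReal.toReal_nonneg]
      all_goals omega
    · rw [if_neg hb] at hn
      push_neg at hb
      have hD : casD W n x = 0 ∨ casD W n x = 1 := by omega
      rcases hD with hD | hD
      · have : X n x = 0 := by
          rw [hXdef]; simp only [hD]; rfl
        rw [this]
        simp [ENNReal.toReal_nonneg]
      · have hXval : X n x = f ((e n : ℕ)) := by
          rw [hXdef]
          simp only [hD]
          show Vp f (e n) 1 = f ((e n : ℕ))
          show f (((e n : ℕ))^(0+1)) = f ((e n : ℕ))
          rw [zero_add, pow_one]
        have hGEval : (GE n x).toReal = |f ((e n : ℕ))| := by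
          rw [hGEdef]
          simp only [Set.indicator_of_mem (Set.mem_setOf_eq ▸ hD : x ∈ {x | casD W n x = 1}),
            if_pos hb]
          exact ENNReal.toReal_ofReal (abs_nonneg _)
        rw [hXval, hGEval, Real.norm_eq_abs]
  -- the partial sums converge a.e. to S
  have htend : ∀ᵐ x ∂mIco, Filter.Tendsto (fun n => casT W V n x)
      Filter.atTop (nhds (S x)) := by
    filter_upwards [hsummable] with x hx
    have h1 := hx.hasSum.tendsto_sum_nat
    apply h1.congr
    intro n
    rw [casT_eq]
  have hSmeas : AEMeasurable S mIco :=
    aemeasurable_of_tendsto_metrizable_ae' (fun n => (measurable_casT hW n).aemeasurable)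
      htend
  refine ⟨Measure.map S mIco, MeasureTheory.Measure.isProbabilityMeasure_map hSmeas, ?_⟩
  intro θ
  have hM : Multipliable (localFactor f r θ) := multipliable_localFactor hr f θ hs1 hs3
  refine ⟨hM, ?_⟩
  have hnorm1 : ∀ a : ℝ, ‖Complex.exp ((θ:ℂ) * (a:ℂ) * Complex.I)‖ = 1 := by
    intro a
    rw [Complex.norm_exp]
    simp
  have hcont : Continuous fun t : ℝ => Complex.exp ((θ:ℂ) * (t:ℂ) * Complex.I) := by
    apply Complex.continuous_exp.comp
    exact (continuous_const.mul Complex.continuous_ofReal).mul continuous_const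
  have h3 : ∀ n, ∫ x, Complex.exp ((θ:ℂ) * (casT W V n x : ℂ) * Complex.I) ∂mIco
      = ∏ i ∈ Finset.range n, localFactor f r θ (e i) := by
    intro n
    rw [integral_exp_casT hW θ n]
    apply Finset.prod_congr rfl
    intro i _
    exact (localFactor_eq hr (e i) f θ).symm
  have h2 : Filter.Tendsto
      (fun n => ∫ x, Complex.exp ((θ:ℂ) * (casT W V n x : ℂ) * Complex.I) ∂mIco)
      Filter.atTop (nhds (∫ x, Complex.exp ((θ:ℂ) * (S x : ℂ) * Complex.I) ∂mIco)) := by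
    apply MeasureTheory.tendsto_integral_of_dominated_convergence (fun _ => (1:ℝ))
    · intro n
      apply Measurable.aestronglyMeasurable
      exact Complex.measurable_exp.comp
        (((Complex.measurable_ofReal.comp (measurable_casT hW n)).const_mul
          (θ:ℂ)).mul_const Complex.I)
    · exact MeasureTheory.integrable_const 1
    · intro n
      apply Filter.Eventually.of_forall
      intro x
      rw [hnorm1]
    · filter_upwards [htend] with x hx
      exact (hcont.tendsto (S x)).comp hx
  have h1 : ∫ t : ℝ, Complex.exp ((θ:ℂ) * (t:ℂ) * Complex.I) ∂(Measure.map S mIco)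
      = ∫ x, Complex.exp ((θ:ℂ) * (S x : ℂ) * Complex.I) ∂mIco :=
    MeasureTheory.integral_map hSmeas hcont.aestronglyMeasurable
  have h4 : Filter.Tendsto (fun n => ∏ i ∈ Finset.range n, localFactor f r θ (e i))
      Filter.atTop (nhds (∏' p : Nat.Primes, localFactor f r θ p)) := by
    have hp : HasProd (localFactor f r θ ∘ e) (∏' p : Nat.Primes, localFactor f r θ p) :=
      (Equiv.hasProd_iff e).2 hM.hasProd
    exact hp.tendsto_prod_nat
  have h2' : Filter.Tendsto (fun n => ∏ i ∈ Finset.range n, localFactor f r θ (e i))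
      Filter.atTop (nhds (∫ x, Complex.exp ((θ:ℂ) * (S x : ℂ) * Complex.I) ∂mIco)) :=
    h2.congr h3
  rw [h1.symm] at h2'
  exact tendsto_nhds_unique h4 h2'

end main

end EWProof

/-- If the additive function `f` satisfies the Erdős–Wintner three-series condition, then
for each `r ≥ 0` the product `φ_{F_r}(θ) = ∏_p (1 + (1−1/p) ∑_{ν≥1} (e^{iθf(p^ν)}−1)/
(p^{ν−1}(p−1+r)))` converges for every real `θ` and is the characteristic function of a
probability distribution `F_r` on `ℝ`. -/
theorem stmt_11 (f : ℕ → ℝ)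
    (hadd : ∀ m n : ℕ, 1 ≤ m → 1 ≤ n → Nat.Coprime m n → f (m * n) = f m + f n)
    (hs1 : Summable (fun p : Nat.Primes =>
      if 1 < |f (p : ℕ)| then 1 / ((p : ℕ) : ℝ) else 0))
    (hs2 : Summable (fun p : Nat.Primes =>
      if |f (p : ℕ)| ≤ 1 then f (p : ℕ) ^ 2 / ((p : ℕ) : ℝ) else 0))
    (hs3 : Summable (fun p : Nat.Primes =>
      if |f (p : ℕ)| ≤ 1 then f (p : ℕ) / ((p : ℕ) : ℝ) else 0)) :
    ∀ r : ℝ, 0 ≤ r → ∃ μ : Measure ℝ, IsProbabilityMeasure μ ∧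
      ∀ θ : ℝ, Multipliable (localFactor f r θ) ∧
        ∏' p : Nat.Primes, localFactor f r θ p
          = ∫ t : ℝ, Complex.exp (θ * t * Complex.I) ∂μ :=
  fun r hr => EWProof.main f hs1 hs3 r hr
end
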